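/- Let $r \geq 3$ and let $G_1$ be the pan graph on vertices $u_0, u_1, \dots, u_r$ whose edges are the pendant edge $u_0u_r$ together with the cycle edges $u_1u_2$, $u_iu_{i+2}$ for $1 \leq i \leq r-2$, and $u_{r-1}u_r$. Let $H_0, H_1, \dots, H_r$ be connected graphs, each on at least two vertices, with $|V(H_i)| \leq |V(H_{i+1})|$ for all $0 \leq i \leq r-1$. Form the generalized edge corona $G_1 \diamond (H_0, H_1, \dots, H_r)$ by joining both endpoints of the edge $u_0u_r$ to every vertex of $H_0$, both endpoints of $u_1u_2$ to every vertex of $H_1$, both endpoints of $u_iu_{i+2}$ to every vertex of $H_{i+1}$ for $1 \leq i \leq r-2$, and both endpoints of $u_{r-1}u_r$ to every vertex of $H_r$. Suppose that: (a) $\Delta(H_0) < \delta(H_1)$; (b) $\Delta(H_i) \leq \delta(H_{i+1})$ for all $1 \leq i \leq r-1$; (c) the degree of $u_0$ in the corona graph is at most the minimum over vertices $v$ of $H_i$ of the degree of $v$ in the corona graph, for every $0 \leq i \leq r$; and (d) the maximum degree in the corona graph over vertices of $H_r$ is at most the degree of $u_1$ in the corona graph. Then $G_1 \diamond (H_0,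 H_1, \dots, H_r)$ is antimagic. -/

import Mathlib

/-- The degree of a vertex `v` in a graph `G`. -/
noncomputable def vdeg {V : Type*} (G : SimpleGraph V) (v : V) : ℕ :=
  Nat.card (G.neighborSet v)

open Classical in
/-- A finite graph is antimagic if its edges can be labeled bijectively with
`1, 2, ..., |E|` so that the vertex sums (sums of labels of incident edges)
are pairwise distinct. -/
def IsAntimagic {V : Type*} [Fintype V] (G : SimpleGraph V) : Prop :=
  ∃ f : Sym2 V → ℕ,
    Set.BijOn f G.edgeSet (Set.Icc 1 (Nat.card G.edgeSet)) ∧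
    Function.Injective (fun v : V => ∑ u : V, if G.Adj v u then f s(v, u) else 0)

/-- The generalized edge corona of `G` (with edges indexed by `ι`, the `i`-th edge
having endpoints `ends i`) and the family `H i`: take the disjoint union of `G` and
all the `H i`, and join both endpoints of the `i`-th edge of `G` to every vertex of `H i`. -/
def genEdgeCorona {A ι : Type*} {B : ι → Type*}
    (G : SimpleGraph A) (ends : ι → A × A) (H : ∀ i, SimpleGraph (B i)) :
    SimpleGraph (A ⊕ (Σ i, B i)) :=
  SimpleGraph.fromRel (fun x y =>
    match x, y with
    | Sum.inl a, Sum.inl b => G.Adj a b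
    | Sum.inl a, Sum.inr ⟨i, _⟩ => a = (ends i).1 ∨ a = (ends i).2
    | Sum.inr _, Sum.inl _ => False
    | Sum.inr ⟨i, u⟩, Sum.inr ⟨j, v⟩ => ∃ h : i = j, (H j).Adj (h ▸ u) v)

/-- Vertices of the spider with three legs, each a path on `p` vertices:
`none` is the center `v₀` and `some (l, k)` is the `(k+1)`-st vertex of leg `l`. -/
abbrev SpiderV (p : ℕ) := Option (Fin 3 × Fin p)

/-- Endpoints of the edges of the spider, indexed by `n : Fin (3p)`; the edge
indexed by `n = 3k + l` joins positions `p-k` and `p-k-1` of leg `l` when `k ≤ p-2`,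
and joins the center to the first vertex of leg `l` when `k = p-1`.
(So `H (n)` plays the role of `H_{n+1} = H_{3k+l+1}` of the paper.) -/
def spiderEnds (p : ℕ) (hp : 1 ≤ p) (n : Fin (3 * p)) : SpiderV p × SpiderV p :=
  if (n : ℕ) / 3 + 1 = p then
    (none, some (⟨(n : ℕ) % 3, by omega⟩, ⟨0, by omega⟩))
  else
    (some (⟨(n : ℕ) % 3, by omega⟩, ⟨p - (n : ℕ) / 3 - 1, by omega⟩),
     some (⟨(n : ℕ) % 3, by omega⟩, ⟨p - (n : ℕ) / 3 - 2, by omega⟩))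

/-- The spider graph with center `v₀` of degree `3` and three legs, each a path on
`p` vertices. -/
def spiderGraph (p : ℕ) (hp : 1 ≤ p) : SimpleGraph (SpiderV p) :=
  SimpleGraph.fromRel (fun a b =>
    ∃ n : Fin (3 * p), a = (spiderEnds p hp n).1 ∧ b = (spiderEnds p hp n).2)

/-- The generalized edge corona of the spider graph and the family `H`. -/
def spiderCorona (p : ℕ) (hp : 1 ≤ p) {B : Fin (3 * p) → Type*}
    (H : ∀ n, SimpleGraph (B n)) : SimpleGraph (SpiderV p ⊕ Σ n, B n) :=
  genEdgeCorona (spiderGraph p hp) (spiderEnds p hp) H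

/-- Endpoints of the edges of the pan graph `G₁` on vertices `u₀, u₁, ..., u_r`
(so `V = Fin (r+1)`), indexed so that the graph `Hᵢ` is joined to the edge `panEnds r hr i`:
`H₀` to the pendant edge `u₀u_r`, `H₁` to `u₁u₂`, `H_{i+1}` to the cycle edge `u_i u_{i+2}`
for `1 ≤ i ≤ r-2` (i.e. index `j` with `2 ≤ j ≤ r-1` gives edge `u_{j-1}u_{j+1}`),
and `H_r` to `u_{r-1}u_r`. -/
def panEnds (r : ℕ) (hr : 3 ≤ r) (i : Fin (r + 1)) : Fin (r + 1) × Fin (r + 1) :=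
  if (i : ℕ) = 0 then (⟨0, by omega⟩, ⟨r, by omega⟩)
  else if (i : ℕ) = 1 then (⟨1, by omega⟩, ⟨2, by omega⟩)
  else if h : (i : ℕ) = r then (⟨r - 1, by omega⟩, ⟨r, by omega⟩)
  else (⟨(i : ℕ) - 1, by omega⟩, ⟨(i : ℕ) + 1, by have := i.isLt; omega⟩)

/-- The pan graph on `u₀, u₁, ..., u_r`: the pendant edge `u₀u_r` together with the
cycle edges `u₁u₂`, `u_i u_{i+2}` for `1 ≤ i ≤ r-2`, and `u_{r-1}u_r`. -/
def panGraph (r : ℕ) (hr : 3 ≤ r) : SimpleGraph (Fin (r + 1)) :=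
  SimpleGraph.fromRel (fun a b =>
    ∃ i : Fin (r + 1), a = (panEnds r hr i).1 ∧ b = (panEnds r hr i).2)

/-- The generalized edge corona `G₁ ⋄ (H₀, H₁, ..., H_r)` of the pan graph and the
family `H`, joining both endpoints of the `i`-th edge (with endpoints `panEnds r hr i`)
to every vertex of `H i`. -/
def panCorona (r : ℕ) (hr : 3 ≤ r) {B : Fin (r + 1) → Type*}
    (H : ∀ i, SimpleGraph (B i)) : SimpleGraph (Fin (r + 1) ⊕ Σ i, B i) :=
  genEdgeCorona (panGraph r hr) (panEnds r hr) H

section AM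
set_option maxHeartbeats 1000000

open scoped Classical

universe u

/-- Bundle of all the data of the pan corona construction. -/
structure PanData where
  r : ℕ
  hr : 3 ≤ r
  B : Fin (r + 1) → Type u
  inst : ∀ i, Fintype (B i)
  H : ∀ i, SimpleGraph (B i)

namespace PanData

variable (P : PanData)

attribute [instance] PanData.inst

/-- first endpoint, as a natural number -/
def E1 (k : Fin (P.r + 1)) : ℕ := ((panEnds P.r P.hr k).1 : ℕ)
def E2 (k : Fin (P.r + 1)) : ℕ := ((panEnds P.r P.hr k).2 : ℕ)

lemma E1_val (k : Fin (P.r + 1)) :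
    P.E1 k = if (k : ℕ) = 0 then 0 else if (k : ℕ) = 1 then 1
      else if (k : ℕ) = P.r then P.r - 1 else (k : ℕ) - 1 := by
  unfold E1 panEnds
  split_ifs <;> simp_all

lemma E2_val (k : Fin (P.r + 1)) :
    P.E2 k = if (k : ℕ) = 0 then P.r else if (k : ℕ) = 1 then 2
      else if (k : ℕ) = P.r then P.r else (k : ℕ) + 1 := by
  unfold E2 panEnds
  split_ifs <;> simp_all

lemma E1_lt_E2 (k : Fin (P.r + 1)) : P.E1 k < P.E2 k := by
  have h1 := P.E1_val k
  have h2 := P.E2_val k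
  have hk := k.isLt
  have hr := P.hr
  split_ifs at h1 h2 <;> omega

lemma ends_ne (k : Fin (P.r + 1)) :
    (panEnds P.r P.hr k).1 ≠ (panEnds P.r P.hr k).2 := by
  have := P.E1_lt_E2 k
  intro h
  rw [Fin.ext_iff] at h
  exact absurd h (by unfold E1 E2 at this; omega)

/-- the (value of the) first endpoint determines `k` as follows -/
lemma eq_E1_iff (a k : Fin (P.r + 1)) :
    a = (panEnds P.r P.hr k).1 ↔
      ((a : ℕ) = 0 ∧ (k : ℕ) = 0) ∨
      ((a : ℕ) = 1 ∧ ((k : ℕ) = 1 ∨ (k : ℕ) = 2)) ∨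
      (2 ≤ (a : ℕ) ∧ (a : ℕ) ≤ P.r - 1 ∧ (k : ℕ) = (a : ℕ) + 1) := by
  have h1 := P.E1_val k
  have hk := k.isLt
  have ha := a.isLt
  have hr := P.hr
  rw [Fin.ext_iff]
  show (a : ℕ) = P.E1 k ↔ _
  split_ifs at h1 <;> omega

lemma eq_E2_iff (a k : Fin (P.r + 1)) :
    a = (panEnds P.r P.hr k).2 ↔
      (2 ≤ (a : ℕ) ∧ (a : ℕ) ≤ P.r - 1 ∧ (k : ℕ) = (a : ℕ) - 1) ∨
      ((a : ℕ) = P.r ∧ ((k : ℕ) = 0 ∨ (k : ℕ) = P.r - 1 ∨ (k : ℕ) = P.r)) := by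
  have h2 := P.E2_val k
  have hk := k.isLt
  have ha := a.isLt
  have hr := P.hr
  rw [Fin.ext_iff]
  show (a : ℕ) = P.E2 k ↔ _
  split_ifs at h2 <;> omega

/-- distinct indices give distinct (ordered) endpoint pairs -/
lemma ends_inj (k k' : Fin (P.r + 1))
    (h : panEnds P.r P.hr k = panEnds P.r P.hr k') : k = k' := by
  have h1 : P.E1 k = P.E1 k' := by unfold E1; rw [h]
  have h2 : P.E2 k = P.E2 k' := by unfold E2; rw [h]
  have e1 := P.E1_val k; have e1' := P.E1_val k'
  have e2 := P.E2_val k; have e2' := P.E2_val k'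
  have hk := k.isLt; have hk' := k'.isLt; have hr := P.hr
  rw [Fin.ext_iff]
  split_ifs at e1 e1' e2 e2' <;> omega



/-! ### Numerical bookkeeping -/

open scoped Classical in
noncomputable def nn (k : ℕ) : ℕ := if h : k < P.r + 1 then Fintype.card (P.B ⟨k, h⟩) else 0
open scoped Classical in
noncomputable def mm (k : ℕ) : ℕ := if h : k < P.r + 1 then (P.H ⟨k, h⟩).edgeFinset.card else 0

noncomputable def Msum (j : ℕ) : ℕ := ∑ k ∈ Finset.range j, P.mm k
noncomputable def Nsum (j : ℕ) : ℕ := ∑ k ∈ Finset.range j, P.nn k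
noncomputable def MM : ℕ := P.Msum (P.r + 1)
noncomputable def AA (k : ℕ) : ℕ := P.MM + P.r + 1 + 2 * P.Nsum k
noncomputable def lab (k : ℕ) : ℕ := P.MM + 1 + k
noncomputable def Lo (k : ℕ) : ℕ := P.nn k * P.AA k + P.nn k * P.nn k
noncomputable def qq : ℕ := P.MM + (P.r + 1) + 2 * P.Nsum (P.r + 1)

lemma nn_val (i : Fin (P.r + 1)) : P.nn i = Fintype.card (P.B i) := by
  unfold nn; rw [dif_pos i.isLt]
lemma mm_val (i : Fin (P.r + 1)) : P.mm i = (P.H i).edgeFinset.card := by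
  unfold mm; rw [dif_pos i.isLt]

/-! ### Labels of the edges of the `H i` -/

open scoped Classical in
noncomputable def eIdx (i : Fin (P.r + 1)) (e : Sym2 (P.B i)) : ℕ :=
  if he : e ∈ (P.H i).edgeFinset then ((P.H i).edgeFinset.equivFin ⟨e, he⟩ : ℕ) else 0

noncomputable def hlab (i : Fin (P.r + 1)) (e : Sym2 (P.B i)) : ℕ := P.Msum i + 1 + P.eIdx i e

open scoped Classical in
noncomputable def hsum (i : Fin (P.r + 1)) (v : P.B i) : ℕ :=
  ∑ w : P.B i, if (P.H i).Adj v w then P.hlab i s(v, w) else 0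

/-! ### Sorted ranks -/

noncomputable def rkPerm (i : Fin (P.r + 1)) : Equiv.Perm (Fin (Fintype.card (P.B i))) :=
  Tuple.sort (fun j => P.hsum i ((Fintype.equivFin (P.B i)).symm j))

noncomputable def rk (i : Fin (P.r + 1)) : P.B i ≃ Fin (Fintype.card (P.B i)) :=
  ((P.rkPerm i).trans (Fintype.equivFin (P.B i)).symm).symm

lemma rk_symm_apply (i : Fin (P.r + 1)) (j) :
    (P.rk i).symm j = (Fintype.equivFin (P.B i)).symm (P.rkPerm i j) := rfl

lemma hsum_rk_mono (i : Fin (P.r + 1)) {v w : P.B i}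
    (h : (P.rk i v : ℕ) ≤ (P.rk i w : ℕ)) : P.hsum i v ≤ P.hsum i w := by
  have hm := Tuple.monotone_sort (fun j => P.hsum i ((Fintype.equivFin (P.B i)).symm j))
  have hthis := hm (a := P.rk i v) (b := P.rk i w) (by exact_mod_cast h)
  simp only [Function.comp_apply] at hthis
  have e1 : (Fintype.equivFin (P.B i)).symm
      ((Tuple.sort fun j => P.hsum i ((Fintype.equivFin (P.B i)).symm j)) ((P.rk i) v)) = v :=
    (P.rk i).symm_apply_apply v
  have e2 : (Fintype.equivFin (P.B i)).symm
      ((Tuple.sort fun j => P.hsum i ((Fintype.equivFin (P.B i)).symm j)) ((P.rk i) w)) = w :=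
    (P.rk i).symm_apply_apply w
  rw [e1, e2] at hthis
  exact hthis

/-! ### The knobs -/

noncomputable def tval (p : Σ i, P.B i) : ℕ :=
  P.hsum p.1 p.2 + 2 * P.AA p.1 + 4 * (P.rk p.1 p.2 : ℕ) + 3

noncomputable def TT : Set ℕ := Set.range P.tval

noncomputable def cfun (k : ℕ) (p : ℕ) : ℕ :=
  (if k = 2 then P.lab 1 + P.Lo 1 + p else P.lab (k - 2) + P.Lo (k - 2) + (P.nn (k - 2) - p))
    + P.lab k + P.Lo k

noncomputable def auxF (k : ℕ) (prev : ℕ) : ℕ :=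
  if h : ∃ d, d ≤ P.nn k ∧ (P.cfun k prev + d) ∉ P.TT then h.choose else 0

noncomputable def auxP : ℕ → ℕ × ℕ :=
  fun n => Nat.rec ((0 : ℕ), (0 : ℕ)) (fun k ih => (ih.2, P.auxF (k + 2) ih.1)) n

noncomputable def aux (k : ℕ) : ℕ := (P.auxP k).1

lemma aux_zero : P.aux 0 = 0 := rfl
lemma aux_one : P.aux 1 = 0 := rfl
lemma aux_step (k : ℕ) : P.aux (k + 2) = P.auxF (k + 2) (P.aux k) := rfl

noncomputable def cA : ℕ := P.lab 0 + P.Lo 0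
noncomputable def cB : ℕ :=
  P.lab 0 + P.Lo 0 + P.lab (P.r - 1) + P.Lo (P.r - 1) +
    (P.nn (P.r - 1) - P.aux (P.r - 1)) + P.lab P.r + P.Lo P.r + (P.nn P.r - P.aux P.r)

noncomputable def d0F : ℕ :=
  if h : ∃ d, d ≤ P.nn 0 ∧ (P.cA + d) ∉ P.TT ∧ (P.cB + (P.nn 0 - d)) ∉ P.TT then h.choose else 0

noncomputable def dd (k : ℕ) : ℕ := if k = 0 then P.d0F else P.aux k

/-! ### Labels of the join edges -/

noncomputable def eps (i : Fin (P.r + 1)) (v : P.B i) : ℕ :=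
  if (P.rk i v : ℕ) < P.dd i then 1 else 0

noncomputable def xlab (i : Fin (P.r + 1)) (v : P.B i) : ℕ :=
  P.AA i + 2 * (P.rk i v : ℕ) + 1 + P.eps i v

noncomputable def ylab (i : Fin (P.r + 1)) (v : P.B i) : ℕ :=
  P.AA i + 2 * (P.rk i v : ℕ) + 1 + (1 - P.eps i v)

/-! ### The labeling function -/

noncomputable def Fv : (Fin (P.r + 1) ⊕ Σ i, P.B i) → (Fin (P.r + 1) ⊕ Σ i, P.B i) → ℕ
  | Sum.inl a, Sum.inl b =>
      ∑ k : Fin (P.r + 1),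
        ((if a = (panEnds P.r P.hr k).1 ∧ b = (panEnds P.r P.hr k).2 then P.lab k else 0) +
         (if b = (panEnds P.r P.hr k).1 ∧ a = (panEnds P.r P.hr k).2 then P.lab k else 0))
  | Sum.inl a, Sum.inr ⟨i, w⟩ =>
      (if a = (panEnds P.r P.hr i).1 then P.xlab i w else 0) +
      (if a = (panEnds P.r P.hr i).2 then P.ylab i w else 0)
  | Sum.inr ⟨i, w⟩, Sum.inl a =>
      (if a = (panEnds P.r P.hr i).1 then P.xlab i w else 0) +
      (if a = (panEnds P.r P.hr i).2 then P.ylab i w else 0)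
  | Sum.inr ⟨i, v⟩, Sum.inr ⟨j, w⟩ =>
      if h : i = j then (if (P.H j).Adj (h ▸ v) w then P.hlab j s(h ▸ v, w) else 0) else 0

lemma Fv_symm (x y : Fin (P.r + 1) ⊕ Σ i, P.B i) : P.Fv x y = P.Fv y x := by
  rcases x with a | ⟨i, v⟩ <;> rcases y with b | ⟨j, w⟩
  · show (∑ k : Fin (P.r + 1), _) = ∑ k : Fin (P.r + 1), _
    exact Finset.sum_congr rfl fun k _ => add_comm _ _
  · rfl
  · rfl
  · show dite _ _ _ = dite _ _ _
    by_cases h : i = j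
    · subst h
      simp only [dif_pos rfl]
      have : (P.H i).Adj v w ↔ (P.H i).Adj w v := (P.H i).adj_comm v w
      by_cases hadj : (P.H i).Adj v w
      · rw [if_pos hadj, if_pos (this.mp hadj), Sym2.eq_swap]
      · rw [if_neg hadj, if_neg (fun hc => hadj (this.mpr hc))]
    · rw [dif_neg h, dif_neg (fun hc => h hc.symm)]

noncomputable def ff : Sym2 (Fin (P.r + 1) ⊕ Σ i, P.B i) → ℕ := Sym2.lift ⟨P.Fv, P.Fv_symm⟩

lemma ff_mk (x y : Fin (P.r + 1) ⊕ Σ i, P.B i) : P.ff s(x, y) = P.Fv x y := rfl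


/-! ### Elementary numerical lemmas -/

lemma Msum_succ (j : ℕ) : P.Msum (j + 1) = P.Msum j + P.mm j := Finset.sum_range_succ _ j
lemma Nsum_succ (j : ℕ) : P.Nsum (j + 1) = P.Nsum j + P.nn j := Finset.sum_range_succ _ j

lemma Msum_mono : Monotone P.Msum := fun a b hab =>
  Finset.sum_le_sum_of_subset (Finset.range_subset_range.mpr hab)
lemma Nsum_mono : Monotone P.Nsum := fun a b hab =>
  Finset.sum_le_sum_of_subset (Finset.range_subset_range.mpr hab)

lemma AA_succ (k : ℕ) : P.AA (k + 1) = P.AA k + 2 * P.nn k := by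
  unfold AA; rw [Nsum_succ]; ring

lemma AA_mono {k k' : ℕ} (h : k ≤ k') : P.AA k ≤ P.AA k' := by
  unfold AA; have := P.Nsum_mono h; omega

lemma AA_monotone : Monotone (fun k => P.AA k) := fun _ _ h => P.AA_mono h

lemma MM_le_AA (k : ℕ) : P.MM + P.r + 1 ≤ P.AA k := by unfold AA; omega

lemma AA_le_qq {k : ℕ} (h : k ≤ P.r + 1) : P.AA k ≤ P.qq := by
  unfold AA qq; have := P.Nsum_mono h; omega

lemma hlab_bounds (i : Fin (P.r + 1)) (e : Sym2 (P.B i)) (he : e ∈ (P.H i).edgeFinset) :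
    P.Msum i + 1 ≤ P.hlab i e ∧ P.hlab i e ≤ P.Msum (↑i + 1) := by
  have h1 : P.eIdx i e < P.mm i := by
    unfold eIdx
    rw [dif_pos he, P.mm_val]
    exact ((P.H i).edgeFinset.equivFin ⟨e, he⟩).isLt
  unfold hlab
  rw [Msum_succ]
  omega

lemma Msum_le_MM {j : ℕ} (h : j ≤ P.r + 1) : P.Msum j ≤ P.MM := P.Msum_mono h

/-! ### Knob bounds -/

lemma auxF_le (k p : ℕ) : P.auxF k p ≤ P.nn k := by
  unfold auxF
  split
  · next h => exact h.choose_spec.1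
  · exact Nat.zero_le _

lemma aux_le (k : ℕ) : P.aux k ≤ P.nn k := by
  rcases k with _ | _ | k
  · rw [P.aux_zero]; exact Nat.zero_le _
  · rw [P.aux_one]; exact Nat.zero_le _
  · rw [P.aux_step]; exact P.auxF_le _ _

lemma d0F_le : P.d0F ≤ P.nn 0 := by
  unfold d0F
  split
  · next h => exact h.choose_spec.1
  · exact Nat.zero_le _

lemma dd_le (k : ℕ) : P.dd k ≤ P.nn k := by
  unfold dd
  split
  · next h => subst h; exact P.d0F_le
  · exact P.aux_le k

/-! ### Sums of join labels -/

lemma sum_ite_lt (n d : ℕ) : (∑ j ∈ Finset.range n, if j < d then 1 else 0) = min d n := by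
  induction n with
  | zero => simp
  | succ n ih =>
    rw [Finset.sum_range_succ, ih]
    split <;> omega

lemma eps_le_one (i : Fin (P.r + 1)) (v : P.B i) : P.eps i v ≤ 1 := by
  unfold eps; split <;> omega

lemma eps_sum (i : Fin (P.r + 1)) : ∑ v : P.B i, P.eps i v = P.dd i := by
  unfold eps
  rw [← Equiv.sum_comp (P.rk i).symm fun v => if ((P.rk i) v : ℕ) < P.dd ↑i then 1 else 0]
  simp only [Equiv.apply_symm_apply]
  rw [Fin.sum_univ_eq_sum_range (fun j => if j < P.dd ↑i then (1:ℕ) else 0)]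
  rw [sum_ite_lt]
  have h1 := P.dd_le (i : ℕ)
  rw [P.nn_val] at h1
  omega

lemma rk_sum (i : Fin (P.r + 1)) :
    ∑ v : P.B i, 2 * ((P.rk i) v : ℕ) = P.nn i * P.nn i - P.nn i := by
  rw [← Equiv.sum_comp (P.rk i).symm fun v => 2 * ((P.rk i) v : ℕ)]
  simp only [Equiv.apply_symm_apply]
  rw [Fin.sum_univ_eq_sum_range (fun j => 2 * j), ← Finset.mul_sum]
  have h1 := Finset.sum_range_id_mul_two (Fintype.card (P.B i))
  rw [P.nn_val]
  have h2 : Fintype.card (P.B i) * Fintype.card (P.B i) - Fintype.card (P.B i)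
      = Fintype.card (P.B i) * (Fintype.card (P.B i) - 1) := by
    rcases Nat.eq_zero_or_pos (Fintype.card (P.B i)) with h | h
    · simp [h]
    · obtain ⟨m, hm⟩ : ∃ m, Fintype.card (P.B i) = m + 1 :=
        ⟨Fintype.card (P.B i) - 1, by omega⟩
      rw [hm]
      simp only [Nat.add_sub_cancel]
      have : (m + 1) * (m + 1) = (m + 1) * m + (m + 1) := by ring
      omega
  omega

lemma nn_le_sq (k : ℕ) : P.nn k ≤ P.nn k * P.nn k := by
  rcases Nat.eq_zero_or_pos (P.nn k) with h | h
  · omega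
  · exact Nat.le_mul_of_pos_left _ h

lemma xlab_sum (i : Fin (P.r + 1)) : ∑ v : P.B i, P.xlab i v = P.Lo i + P.dd i := by
  unfold xlab
  rw [Finset.sum_add_distrib, Finset.sum_add_distrib, Finset.sum_add_distrib, eps_sum,
    rk_sum, Finset.sum_const, Finset.sum_const]
  simp only [Finset.card_univ, smul_eq_mul, mul_one, ← P.nn_val i]
  have hx := P.nn_le_sq (i : ℕ)
  unfold Lo
  omega

lemma one_sub_eps_sum (i : Fin (P.r + 1)) :
    ∑ v : P.B i, (1 - P.eps i v) = P.nn i - P.dd i := by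
  have h1 : (∑ v : P.B i, (1 - P.eps i v)) + P.dd ↑i = P.nn ↑i := by
    rw [← P.eps_sum i, ← Finset.sum_add_distrib]
    have : ∀ v : P.B i, (1 - P.eps i v) + P.eps i v = 1 := fun v => by
      have := P.eps_le_one i v; omega
    simp only [this]
    rw [Finset.sum_const, Finset.card_univ, smul_eq_mul, mul_one, P.nn_val]
  omega

lemma ylab_sum (i : Fin (P.r + 1)) :
    ∑ v : P.B i, P.ylab i v = P.Lo i + (P.nn i - P.dd i) := by
  unfold ylab
  rw [Finset.sum_add_distrib, Finset.sum_add_distrib, Finset.sum_add_distrib, one_sub_eps_sum,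
    rk_sum, Finset.sum_const, Finset.sum_const]
  simp only [Finset.card_univ, smul_eq_mul, mul_one, ← P.nn_val i]
  have hx := P.nn_le_sq (i : ℕ)
  unfold Lo
  omega

lemma xlab_add_ylab (i : Fin (P.r + 1)) (v : P.B i) :
    P.xlab i v + P.ylab i v = 2 * P.AA i + 4 * ((P.rk i) v : ℕ) + 3 := by
  have := P.eps_le_one i v
  unfold xlab ylab
  omega

lemma xlab_bounds (i : Fin (P.r + 1)) (v : P.B i) :
    P.AA i + 1 ≤ P.xlab i v ∧ P.xlab i v ≤ P.AA (↑i + 1) := by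
  have h1 := P.eps_le_one i v
  have h2 : ((P.rk i) v : ℕ) < P.nn i := by rw [P.nn_val]; exact ((P.rk i) v).isLt
  rw [AA_succ]
  unfold xlab
  omega

lemma ylab_bounds (i : Fin (P.r + 1)) (v : P.B i) :
    P.AA i + 1 ≤ P.ylab i v ∧ P.ylab i v ≤ P.AA (↑i + 1) := by
  have h1 := P.eps_le_one i v
  have h2 : ((P.rk i) v : ℕ) < P.nn i := by rw [P.nn_val]; exact ((P.rk i) v).isLt
  rw [AA_succ]
  unfold ylab
  omega

/-! ### The corona graph and its adjacency -/

noncomputable def GG : SimpleGraph (Fin (P.r + 1) ⊕ Σ i, P.B i) := panCorona P.r P.hr P.H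

lemma pan_adj (a b : Fin (P.r + 1)) :
    (panGraph P.r P.hr).Adj a b ↔ a ≠ b ∧
      ∃ k, (a = (panEnds P.r P.hr k).1 ∧ b = (panEnds P.r P.hr k).2) ∨
           (b = (panEnds P.r P.hr k).1 ∧ a = (panEnds P.r P.hr k).2) := by
  show (SimpleGraph.fromRel _).Adj a b ↔ _
  rw [SimpleGraph.fromRel_adj]
  constructor
  · rintro ⟨hne, ⟨k, h1, h2⟩ | ⟨k, h1, h2⟩⟩
    · exact ⟨hne, k, Or.inl ⟨h1, h2⟩⟩
    · exact ⟨hne, k, Or.inr ⟨h1, h2⟩⟩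
  · rintro ⟨hne, k, ⟨h1, h2⟩ | ⟨h1, h2⟩⟩
    · exact ⟨hne, Or.inl ⟨k, h1, h2⟩⟩
    · exact ⟨hne, Or.inr ⟨k, h1, h2⟩⟩

lemma pan_ends_adj (k : Fin (P.r + 1)) :
    (panGraph P.r P.hr).Adj (panEnds P.r P.hr k).1 (panEnds P.r P.hr k).2 :=
  (P.pan_adj _ _).mpr ⟨P.ends_ne k, k, Or.inl ⟨rfl, rfl⟩⟩

lemma adj_inl_inl (a b : Fin (P.r + 1)) :
    P.GG.Adj (Sum.inl a) (Sum.inl b) ↔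
      ∃ k, (a = (panEnds P.r P.hr k).1 ∧ b = (panEnds P.r P.hr k).2) ∨
           (b = (panEnds P.r P.hr k).1 ∧ a = (panEnds P.r P.hr k).2) := by
  show (SimpleGraph.fromRel _).Adj _ _ ↔ _
  rw [SimpleGraph.fromRel_adj]
  constructor
  · rintro ⟨hne, h | h⟩
    · exact ((P.pan_adj a b).mp h).2
    · obtain ⟨hne', k, h | h⟩ := (P.pan_adj b a).mp h
      · exact ⟨k, Or.inr h⟩
      · exact ⟨k, Or.inl h⟩
  · rintro ⟨k, ⟨h1, h2⟩ | ⟨h1, h2⟩⟩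
    · refine ⟨?_, Or.inl ((P.pan_adj a b).mpr ⟨?_, k, Or.inl ⟨h1, h2⟩⟩)⟩
      · subst h1 h2; exact fun hc => P.ends_ne k (Sum.inl_injective hc)
      · subst h1 h2; exact P.ends_ne k
    · refine ⟨?_, Or.inl ((P.pan_adj a b).mpr ⟨?_, k, Or.inr ⟨h1, h2⟩⟩)⟩
      · subst h1 h2; exact fun hc => P.ends_ne k (Sum.inl_injective hc.symm)
      · subst h1 h2; exact fun hc => P.ends_ne k hc.symm

lemma adj_inl_inr (a : Fin (P.r + 1)) (i : Fin (P.r + 1)) (w : P.B i) :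
    P.GG.Adj (Sum.inl a) (Sum.inr ⟨i, w⟩) ↔
      (a = (panEnds P.r P.hr i).1 ∨ a = (panEnds P.r P.hr i).2) := by
  show (SimpleGraph.fromRel _).Adj _ _ ↔ _
  rw [SimpleGraph.fromRel_adj]
  constructor
  · rintro ⟨hne, h | h⟩
    · exact h
    · exact h.elim
  · intro h
    exact ⟨by simp, Or.inl h⟩

lemma adj_inr_inr (i j : Fin (P.r + 1)) (v : P.B i) (w : P.B j) :
    P.GG.Adj (Sum.inr ⟨i, v⟩) (Sum.inr ⟨j, w⟩) ↔
      ∃ h : i = j, (P.H j).Adj (h ▸ v) w := by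
  show (SimpleGraph.fromRel _).Adj _ _ ↔ _
  rw [SimpleGraph.fromRel_adj]
  constructor
  · rintro ⟨hne, ⟨h, hadj⟩ | ⟨h, hadj⟩⟩
    · exact ⟨h, hadj⟩
    · subst h
      exact ⟨rfl, hadj.symm⟩
  · rintro ⟨h, hadj⟩
    subst h
    refine ⟨fun hc => ?_, Or.inl ⟨rfl, hadj⟩⟩
    · rw [Sum.inr.injEq] at hc
      exact (P.H i).ne_of_adj hadj (eq_of_heq (Sigma.mk.inj_iff.mp hc).2)

lemma Fv_inl_inl (a b : Fin (P.r + 1)) :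
    P.Fv (Sum.inl a) (Sum.inl b) =
      ∑ k : Fin (P.r + 1),
        ((if a = (panEnds P.r P.hr k).1 ∧ b = (panEnds P.r P.hr k).2 then P.lab k else 0) +
         (if b = (panEnds P.r P.hr k).1 ∧ a = (panEnds P.r P.hr k).2 then P.lab k else 0)) := rfl

lemma Fv_inl_inr (a : Fin (P.r + 1)) (i : Fin (P.r + 1)) (w : P.B i) :
    P.Fv (Sum.inl a) (Sum.inr ⟨i, w⟩) =
      (if a = (panEnds P.r P.hr i).1 then P.xlab i w else 0) +
      (if a = (panEnds P.r P.hr i).2 then P.ylab i w else 0) := rfl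

lemma Fv_inr_inl (a : Fin (P.r + 1)) (i : Fin (P.r + 1)) (w : P.B i) :
    P.Fv (Sum.inr ⟨i, w⟩) (Sum.inl a) =
      (if a = (panEnds P.r P.hr i).1 then P.xlab i w else 0) +
      (if a = (panEnds P.r P.hr i).2 then P.ylab i w else 0) := rfl

lemma Fv_inr_inr_same (i : Fin (P.r + 1)) (v w : P.B i) :
    P.Fv (Sum.inr ⟨i, v⟩) (Sum.inr ⟨i, w⟩) =
      if (P.H i).Adj v w then P.hlab i s(v, w) else 0 := by
  show dite _ _ _ = _
  rw [dif_pos rfl]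

lemma Fv_inr_inr_ne {i j : Fin (P.r + 1)} (h : i ≠ j) (v : P.B i) (w : P.B j) :
    P.Fv (Sum.inr ⟨i, v⟩) (Sum.inr ⟨j, w⟩) = 0 := by
  show dite _ _ _ = _
  rw [dif_neg h]

lemma adj_of_Fv_ne (x y : Fin (P.r + 1) ⊕ Σ i, P.B i) (h : P.Fv x y ≠ 0) : P.GG.Adj x y := by
  rcases x with a | ⟨i, v⟩ <;> rcases y with b | ⟨j, w⟩
  · rw [P.Fv_inl_inl] at h
    obtain ⟨k, -, hk⟩ := Finset.exists_ne_zero_of_sum_ne_zero h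
    rw [P.adj_inl_inl]
    refine ⟨k, ?_⟩
    by_cases h1 : a = (panEnds P.r P.hr k).1 ∧ b = (panEnds P.r P.hr k).2
    · exact Or.inl h1
    · by_cases h2 : b = (panEnds P.r P.hr k).1 ∧ a = (panEnds P.r P.hr k).2
      · exact Or.inr h2
      · rw [if_neg h1, if_neg h2] at hk; omega
  · rw [P.Fv_inl_inr] at h
    rw [P.adj_inl_inr]
    by_cases h1 : a = (panEnds P.r P.hr j).1
    · exact Or.inl h1
    · by_cases h2 : a = (panEnds P.r P.hr j).2
      · exact Or.inr h2
      · rw [if_neg h1, if_neg h2] at h; omega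
  · rw [P.Fv_inr_inl] at h
    rw [SimpleGraph.adj_comm, P.adj_inl_inr]
    by_cases h1 : b = (panEnds P.r P.hr i).1
    · exact Or.inl h1
    · by_cases h2 : b = (panEnds P.r P.hr i).2
      · exact Or.inr h2
      · rw [if_neg h1, if_neg h2] at h; omega
  · rw [P.adj_inr_inr]
    by_cases hij : i = j
    · subst hij
      rw [P.Fv_inr_inr_same] at h
      by_cases hadj : (P.H i).Adj v w
      · exact ⟨rfl, hadj⟩
      · rw [if_neg hadj] at h; omega
    · rw [P.Fv_inr_inr_ne hij] at h; omega

/-! ### Vertex sums -/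

open scoped Classical in
noncomputable def WW (v : Fin (P.r + 1) ⊕ Σ i, P.B i) : ℕ :=
  ∑ u : Fin (P.r + 1) ⊕ Σ i, P.B i, if P.GG.Adj v u then P.ff s(v, u) else 0

lemma WW_eq_sum_Fv (v : Fin (P.r + 1) ⊕ Σ i, P.B i) :
    P.WW v = ∑ u : Fin (P.r + 1) ⊕ Σ i, P.B i, P.Fv v u := by
  refine Finset.sum_congr rfl fun u _ => ?_
  by_cases h : P.GG.Adj v u
  · rw [if_pos h]; rfl
  · rw [if_neg h]
    by_contra hne
    exact h (P.adj_of_Fv_ne v u fun hc => hne hc.symm)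

/-- helper: sum over `Fin` of an `ite` whose condition pins down the index -/
lemma sum_ite_eq_single {n : ℕ} (p : Fin n → Prop) [DecidablePred p] (G : Fin n → ℕ) (k₀ : Fin n)
    (h : ∀ k, p k ↔ k = k₀) :
    (∑ k : Fin n, if p k then G k else 0) = G k₀ := by
  classical
  have : ∀ k : Fin n, (if p k then G k else 0) = if k = k₀ then G k else 0 := fun k => by
    by_cases hk : p k
    · rw [if_pos hk, if_pos ((h k).mp hk)]
    · rw [if_neg hk, if_neg (fun hc => hk ((h k).mpr hc))]
  rw [Finset.sum_congr rfl fun k _ => this k]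
  simp [Finset.sum_ite_eq' Finset.univ k₀ G]

lemma sum_ite_eq_zero {n : ℕ} (p : Fin n → Prop) [DecidablePred p] (G : Fin n → ℕ)
    (h : ∀ k, ¬ p k) :
    (∑ k : Fin n, if p k then G k else 0) = 0 := by
  classical
  refine Finset.sum_eq_zero fun k _ => if_neg (h k)

lemma sum_ite_eq_pair {n : ℕ} (p : Fin n → Prop) [DecidablePred p] (G : Fin n → ℕ) (k₁ k₂ : Fin n)
    (hne : k₁ ≠ k₂) (h : ∀ k, p k ↔ (k = k₁ ∨ k = k₂)) :
    (∑ k : Fin n, if p k then G k else 0) = G k₁ + G k₂ := by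
  classical
  have : ∀ k : Fin n, (if p k then G k else 0) =
      (if k = k₁ then G k else 0) + (if k = k₂ then G k else 0) := fun k => by
    by_cases h1 : k = k₁
    · subst h1
      rw [if_pos ((h k).mpr (Or.inl rfl)), if_pos rfl, if_neg hne]
      omega
    · by_cases h2 : k = k₂
      · subst h2
        rw [if_pos ((h k).mpr (Or.inr rfl)), if_neg h1, if_pos rfl]
        omega
      · rw [if_neg (fun hc => ((h k).mp hc).elim h1 h2), if_neg h1, if_neg h2]
  rw [Finset.sum_congr rfl fun k _ => this k, Finset.sum_add_distrib]
  simp [Finset.sum_ite_eq' Finset.univ k₁ G, Finset.sum_ite_eq' Finset.univ k₂ G]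

lemma sum_ite_eq_triple {n : ℕ} (p : Fin n → Prop) [DecidablePred p] (G : Fin n → ℕ) (k₁ k₂ k₃ : Fin n)
    (h12 : k₁ ≠ k₂) (h13 : k₁ ≠ k₃) (h23 : k₂ ≠ k₃)
    (h : ∀ k, p k ↔ (k = k₁ ∨ k = k₂ ∨ k = k₃)) :
    (∑ k : Fin n, if p k then G k else 0) = G k₁ + G k₂ + G k₃ := by
  classical
  have : ∀ k : Fin n, (if p k then G k else 0) =
      ((if k = k₁ then G k else 0) + (if k = k₂ then G k else 0)) +
        (if k = k₃ then G k else 0) := fun k => by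
    by_cases h1 : k = k₁
    · subst h1
      rw [if_pos ((h k).mpr (Or.inl rfl)), if_pos rfl, if_neg h12, if_neg h13]
      omega
    · by_cases h2 : k = k₂
      · subst h2
        rw [if_pos ((h k).mpr (Or.inr (Or.inl rfl))), if_neg h1, if_pos rfl, if_neg h23]
        omega
      · by_cases h3 : k = k₃
        · subst h3
          rw [if_pos ((h k).mpr (Or.inr (Or.inr rfl))), if_neg h1, if_neg h2, if_pos rfl]
          omega
        · rw [if_neg (fun hc => ((h k).mp hc).elim h1 fun hc' => hc'.elim h2 h3),
            if_neg h1, if_neg h2, if_neg h3]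
  rw [Finset.sum_congr rfl fun k _ => this k, Finset.sum_add_distrib, Finset.sum_add_distrib]
  simp [Finset.sum_ite_eq' Finset.univ k₁ G, Finset.sum_ite_eq' Finset.univ k₂ G,
    Finset.sum_ite_eq' Finset.univ k₃ G]

lemma WW_inr (i : Fin (P.r + 1)) (v : P.B i) :
    P.WW (Sum.inr ⟨i, v⟩) = P.tval ⟨i, v⟩ := by
  rw [WW_eq_sum_Fv, Fintype.sum_sum_type]
  have hinl : (∑ a : Fin (P.r + 1), P.Fv (Sum.inr ⟨i, v⟩) (Sum.inl a)) =
      P.xlab i v + P.ylab i v := by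
    have : ∀ a : Fin (P.r + 1), P.Fv (Sum.inr ⟨i, v⟩) (Sum.inl a) =
        (if a = (panEnds P.r P.hr i).1 then P.xlab i v else 0) +
        (if a = (panEnds P.r P.hr i).2 then P.ylab i v else 0) := fun a => rfl
    rw [Finset.sum_congr rfl fun a _ => this a, Finset.sum_add_distrib]
    rw [sum_ite_eq_single _ _ (panEnds P.r P.hr i).1 (fun a => Iff.rfl),
        sum_ite_eq_single _ _ (panEnds P.r P.hr i).2 (fun a => Iff.rfl)]
  have hinr : (∑ p : Σ j, P.B j, P.Fv (Sum.inr ⟨i, v⟩) (Sum.inr p)) = P.hsum i v := by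
    rw [← Finset.univ_sigma_univ, Finset.sum_sigma]
    rw [Finset.sum_eq_single_of_mem i (Finset.mem_univ i)]
    · rw [show (∑ w : P.B i, P.Fv (Sum.inr ⟨i, v⟩) (Sum.inr ⟨i, w⟩)) =
          ∑ w : P.B i, if (P.H i).Adj v w then P.hlab i s(v, w) else 0 from
        Finset.sum_congr rfl fun w _ => P.Fv_inr_inr_same i v w]
      rfl
    · intro j _ hji
      exact Finset.sum_eq_zero fun w _ => P.Fv_inr_inr_ne (Ne.symm hji) v w
  rw [hinl, hinr, P.xlab_add_ylab]
  unfold tval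
  dsimp only
  omega

lemma WW_inl (a : Fin (P.r + 1)) :
    P.WW (Sum.inl a) =
      ∑ k : Fin (P.r + 1),
        ((if a = (panEnds P.r P.hr k).1 then P.lab k + P.Lo k + P.dd k else 0) +
         (if a = (panEnds P.r P.hr k).2 then P.lab k + P.Lo k + (P.nn k - P.dd k) else 0)) := by
  rw [WW_eq_sum_Fv, Fintype.sum_sum_type]
  have hinl : (∑ b : Fin (P.r + 1), P.Fv (Sum.inl a) (Sum.inl b)) =
      ∑ k : Fin (P.r + 1),
        ((if a = (panEnds P.r P.hr k).1 then P.lab k else 0) +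
         (if a = (panEnds P.r P.hr k).2 then P.lab k else 0)) := by
    rw [Finset.sum_congr rfl fun b _ => P.Fv_inl_inl a b, Finset.sum_comm]
    refine Finset.sum_congr rfl fun k _ => ?_
    rw [Finset.sum_add_distrib]
    congr 1
    · by_cases h1 : a = (panEnds P.r P.hr k).1
      · rw [if_pos h1]
        have : ∀ b : Fin (P.r + 1),
            (if a = (panEnds P.r P.hr k).1 ∧ b = (panEnds P.r P.hr k).2 then P.lab k else 0) =
            (if b = (panEnds P.r P.hr k).2 then P.lab k else 0) := fun b => by
          by_cases h2 : b = (panEnds P.r P.hr k).2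
          · rw [if_pos ⟨h1, h2⟩, if_pos h2]
          · rw [if_neg (fun hc => h2 hc.2), if_neg h2]
        rw [Finset.sum_congr rfl fun b _ => this b,
          sum_ite_eq_single _ _ (panEnds P.r P.hr k).2 (fun b => Iff.rfl)]
      · rw [if_neg h1]
        exact Finset.sum_eq_zero fun b _ => if_neg (fun hc => h1 hc.1)
    · by_cases h1 : a = (panEnds P.r P.hr k).2
      · rw [if_pos h1]
        have : ∀ b : Fin (P.r + 1),
            (if b = (panEnds P.r P.hr k).1 ∧ a = (panEnds P.r P.hr k).2 then P.lab k else 0) =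
            (if b = (panEnds P.r P.hr k).1 then P.lab k else 0) := fun b => by
          by_cases h2 : b = (panEnds P.r P.hr k).1
          · rw [if_pos ⟨h2, h1⟩, if_pos h2]
          · rw [if_neg (fun hc => h2 hc.1), if_neg h2]
        rw [Finset.sum_congr rfl fun b _ => this b,
          sum_ite_eq_single _ _ (panEnds P.r P.hr k).1 (fun b => Iff.rfl)]
      · rw [if_neg h1]
        exact Finset.sum_eq_zero fun b _ => if_neg (fun hc => h1 hc.2)
  have hinr : (∑ p : Σ j, P.B j, P.Fv (Sum.inl a) (Sum.inr p)) =
      ∑ k : Fin (P.r + 1),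
        ((if a = (panEnds P.r P.hr k).1 then P.Lo k + P.dd k else 0) +
         (if a = (panEnds P.r P.hr k).2 then P.Lo k + (P.nn k - P.dd k) else 0)) := by
    rw [← Finset.univ_sigma_univ, Finset.sum_sigma]
    refine Finset.sum_congr rfl fun k _ => ?_
    have : ∀ w : P.B k, P.Fv (Sum.inl a) (Sum.inr ⟨k, w⟩) =
        (if a = (panEnds P.r P.hr k).1 then P.xlab k w else 0) +
        (if a = (panEnds P.r P.hr k).2 then P.ylab k w else 0) := fun w => rfl
    rw [Finset.sum_congr rfl fun w _ => this w, Finset.sum_add_distrib]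
    congr 1
    · by_cases h1 : a = (panEnds P.r P.hr k).1
      · rw [if_pos h1, Finset.sum_congr rfl fun w _ => if_pos h1, P.xlab_sum]
      · rw [if_neg h1, Finset.sum_congr rfl fun w _ => if_neg h1]
        simp
    · by_cases h1 : a = (panEnds P.r P.hr k).2
      · rw [if_pos h1, Finset.sum_congr rfl fun w _ => if_pos h1, P.ylab_sum]
      · rw [if_neg h1, Finset.sum_congr rfl fun w _ => if_neg h1]
        simp
  rw [hinl, hinr, ← Finset.sum_add_distrib]
  refine Finset.sum_congr rfl fun k _ => ?_
  by_cases h1 : a = (panEnds P.r P.hr k).1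
  · have h2 : ¬ a = (panEnds P.r P.hr k).2 := fun h2 => P.ends_ne k (h1.symm.trans h2)
    rw [if_pos h1, if_pos h1, if_pos h1, if_neg h2, if_neg h2, if_neg h2]
    omega
  · rw [if_neg h1, if_neg h1, if_neg h1]
    by_cases h2 : a = (panEnds P.r P.hr k).2
    · rw [if_pos h2, if_pos h2, if_pos h2]
      omega
    · rw [if_neg h2, if_neg h2, if_neg h2]

/-! ### Closed forms for the pan-vertex sums -/

lemma WW_u0 (a : Fin (P.r + 1)) (ha : (a : ℕ) = 0) :
    P.WW (Sum.inl a) = P.lab 0 + P.Lo 0 + P.dd 0 := by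
  have hr := P.hr
  rw [P.WW_inl, Finset.sum_add_distrib,
    sum_ite_eq_single _ _ (⟨0, by omega⟩ : Fin (P.r + 1))
      (fun k => by
        have hk := k.isLt
        simp only [P.eq_E1_iff, Fin.ext_iff]
        omega),
    sum_ite_eq_zero _ _
      (fun k => by
        have hk := k.isLt
        simp only [P.eq_E2_iff]
        omega)]
  rfl

lemma WW_u1 (a : Fin (P.r + 1)) (ha : (a : ℕ) = 1) :
    P.WW (Sum.inl a) =
      (P.lab 1 + P.Lo 1 + P.dd 1) + (P.lab 2 + P.Lo 2 + P.dd 2) := by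
  have hr := P.hr
  rw [P.WW_inl, Finset.sum_add_distrib,
    sum_ite_eq_pair _ _ (⟨1, by omega⟩ : Fin (P.r + 1)) (⟨2, by omega⟩ : Fin (P.r + 1))
      (by apply Fin.ne_of_val_ne; show (1 : ℕ) ≠ 2; omega)
      (fun k => by
        have hk := k.isLt
        simp only [P.eq_E1_iff, Fin.ext_iff]
        omega),
    sum_ite_eq_zero _ _
      (fun k => by
        have hk := k.isLt
        simp only [P.eq_E2_iff]
        omega)]
  rfl

lemma WW_mid (a : Fin (P.r + 1)) (ha2 : 2 ≤ (a : ℕ)) (har : (a : ℕ) ≤ P.r - 1) :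
    P.WW (Sum.inl a) =
      (P.lab ((a : ℕ) + 1) + P.Lo ((a : ℕ) + 1) + P.dd ((a : ℕ) + 1)) +
      (P.lab ((a : ℕ) - 1) + P.Lo ((a : ℕ) - 1) +
        (P.nn ((a : ℕ) - 1) - P.dd ((a : ℕ) - 1))) := by
  have hr := P.hr
  have ha := a.isLt
  rw [P.WW_inl, Finset.sum_add_distrib,
    sum_ite_eq_single _ _ (⟨(a : ℕ) + 1, by omega⟩ : Fin (P.r + 1))
      (fun k => by
        have hk := k.isLt
        simp only [P.eq_E1_iff, Fin.ext_iff]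
        omega),
    sum_ite_eq_single _ _ (⟨(a : ℕ) - 1, by omega⟩ : Fin (P.r + 1))
      (fun k => by
        have hk := k.isLt
        simp only [P.eq_E2_iff, Fin.ext_iff]
        omega)]

lemma WW_ur (a : Fin (P.r + 1)) (ha : (a : ℕ) = P.r) :
    P.WW (Sum.inl a) =
      (P.lab 0 + P.Lo 0 + (P.nn 0 - P.dd 0)) +
      (P.lab (P.r - 1) + P.Lo (P.r - 1) + (P.nn (P.r - 1) - P.dd (P.r - 1))) +
      (P.lab P.r + P.Lo P.r + (P.nn P.r - P.dd P.r)) := by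
  have hr := P.hr
  rw [P.WW_inl, Finset.sum_add_distrib,
    sum_ite_eq_zero _ _
      (fun k => by
        have hk := k.isLt
        simp only [P.eq_E1_iff]
        omega),
    sum_ite_eq_triple _ _ (⟨0, by omega⟩ : Fin (P.r + 1)) (⟨P.r - 1, by omega⟩ : Fin (P.r + 1))
      (⟨P.r, by omega⟩ : Fin (P.r + 1))
      (by apply Fin.ne_of_val_ne; show (0 : ℕ) ≠ P.r - 1; omega)
      (by apply Fin.ne_of_val_ne; show (0 : ℕ) ≠ P.r; omega)
      (by apply Fin.ne_of_val_ne; show P.r - 1 ≠ P.r; omega)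
      (fun k => by
        have hk := k.isLt
        simp only [P.eq_E2_iff, Fin.ext_iff]
        omega)]
  rw [zero_add]

/-! ### Hypothesis-dependent basics -/

section Hyps

open scoped Classical

lemma nn_two (hcard : ∀ i, 2 ≤ Fintype.card (P.B i)) {k : ℕ} (hk : k ≤ P.r) :
    2 ≤ P.nn k := by
  unfold nn
  rw [dif_pos (by omega)]
  exact hcard _

lemma nn_mono (hmono : ∀ i j : Fin (P.r + 1), (i : ℕ) + 1 = (j : ℕ) →
      Fintype.card (P.B i) ≤ Fintype.card (P.B j)) {k : ℕ} (hk : k + 1 ≤ P.r) :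
    P.nn k ≤ P.nn (k + 1) := by
  unfold nn
  rw [dif_pos (by omega : k < P.r + 1), dif_pos (by omega : k + 1 < P.r + 1)]
  exact hmono ⟨k, by omega⟩ ⟨k + 1, by omega⟩ rfl

lemma vdeg_eq (i : Fin (P.r + 1)) (v : P.B i) :
    vdeg (P.H i) v = ∑ w : P.B i, if (P.H i).Adj v w then 1 else 0 := by
  rw [vdeg, Nat.card_eq_fintype_card, ← Set.toFinset_card]
  have h1 : ((P.H i).neighborSet v).toFinset = Finset.univ.filter ((P.H i).Adj v) := by
    ext w
    simp [SimpleGraph.neighborSet]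
    exact Set.mem_toFinset
  rw [h1, Finset.card_filter]

lemma deg_pos (hconn : ∀ i, (P.H i).Connected) (hcard : ∀ i, 2 ≤ Fintype.card (P.B i))
    (i : Fin (P.r + 1)) (v : P.B i) : 1 ≤ vdeg (P.H i) v := by
  obtain ⟨u, hu⟩ := Fintype.exists_ne_of_one_lt_card (by have := hcard i; omega) v
  obtain ⟨p⟩ := (hconn i).preconnected v u
  have hadj : ∃ w, (P.H i).Adj v w := by
    cases p with
    | nil => exact absurd rfl hu.symm
    | cons h _ => exact ⟨_, h⟩
  obtain ⟨w, hw⟩ := hadj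
  rw [P.vdeg_eq]
  calc (1 : ℕ) = if (P.H i).Adj v w then 1 else 0 := by rw [if_pos hw]
    _ ≤ ∑ w : P.B i, if (P.H i).Adj v w then 1 else 0 :=
        Finset.single_le_sum (f := fun w => if (P.H i).Adj v w then (1:ℕ) else 0)
          (fun _ _ => Nat.zero_le _) (Finset.mem_univ w)

lemma hsum_le (i : Fin (P.r + 1)) (v : P.B i) :
    P.hsum i v ≤ vdeg (P.H i) v * P.Msum (↑i + 1) := by
  rw [P.vdeg_eq, Finset.sum_mul]
  unfold hsum
  refine Finset.sum_le_sum fun w _ => ?_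
  by_cases h : (P.H i).Adj v w
  · rw [if_pos h, if_pos h, one_mul]
    exact (P.hlab_bounds i s(v, w) (by rwa [SimpleGraph.mem_edgeFinset, SimpleGraph.mem_edgeSet])).2
  · rw [if_neg h, if_neg h, zero_mul]

lemma le_hsum (i : Fin (P.r + 1)) (v : P.B i) :
    vdeg (P.H i) v * (P.Msum ↑i + 1) ≤ P.hsum i v := by
  rw [P.vdeg_eq, Finset.sum_mul]
  unfold hsum
  refine Finset.sum_le_sum fun w _ => ?_
  by_cases h : (P.H i).Adj v w
  · rw [if_pos h, if_pos h, one_mul]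
    exact (P.hlab_bounds i s(v, w) (by rwa [SimpleGraph.mem_edgeFinset, SimpleGraph.mem_edgeSet])).1
  · rw [if_neg h, if_neg h, zero_mul]

lemma hsum_lt_step (i j : Fin (P.r + 1)) (hij : (i : ℕ) + 1 = (j : ℕ)) (v : P.B i) (w : P.B j)
    (hdeg : vdeg (P.H i) v ≤ vdeg (P.H j) w) (hpos : 1 ≤ vdeg (P.H j) w) :
    P.hsum i v < P.hsum j w := by
  have h1 := P.hsum_le i v
  have h2 := P.le_hsum j w
  have hM : P.Msum (↑i + 1) = P.Msum ↑j := by rw [hij]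
  have h3 : vdeg (P.H i) v * P.Msum (↑i + 1) ≤ vdeg (P.H j) w * P.Msum ↑j := by
    rw [hM]; exact Nat.mul_le_mul_right _ hdeg
  have h4 : vdeg (P.H j) w * P.Msum ↑j < vdeg (P.H j) w * (P.Msum ↑j + 1) := by
    have := Nat.mul_le_mul_left (vdeg (P.H j) w) (Nat.le_refl (P.Msum ↑j))
    calc vdeg (P.H j) w * P.Msum ↑j
        < vdeg (P.H j) w * P.Msum ↑j + vdeg (P.H j) w := by omega
      _ = vdeg (P.H j) w * (P.Msum ↑j + 1) := by ring
  omega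

lemma deg_step
    (ha : ∀ (u : P.B ⟨0, by have := P.hr; omega⟩) (v : P.B ⟨1, by have := P.hr; omega⟩),
      vdeg (P.H ⟨0, by have := P.hr; omega⟩) u < vdeg (P.H ⟨1, by have := P.hr; omega⟩) v)
    (hb : ∀ i j : Fin (P.r + 1), 1 ≤ (i : ℕ) → (i : ℕ) + 1 = (j : ℕ) →
      ∀ (u : P.B i) (v : P.B j), vdeg (P.H i) u ≤ vdeg (P.H j) v)
    (i j : Fin (P.r + 1)) (hij : (i : ℕ) + 1 = (j : ℕ)) (v : P.B i) (w : P.B j) :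
    vdeg (P.H i) v ≤ vdeg (P.H j) w := by
  by_cases h0 : (i : ℕ) = 0
  · rcases i with ⟨iv, hiv⟩
    rcases j with ⟨jv, hjv⟩
    have h0' : iv = 0 := h0
    have hij' : iv + 1 = jv := hij
    subst h0'
    have hj1 : jv = 1 := by omega
    subst hj1
    exact (ha v w).le
  · exact hb i j (by omega) hij v w

end Hyps

section Hyps2

open scoped Classical

lemma hsum_lt_blocks
    (hstep : ∀ i j : Fin (P.r + 1), (i : ℕ) + 1 = (j : ℕ) →
      ∀ (v : P.B i) (w : P.B j), P.hsum i v < P.hsum j w)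
    (hcard : ∀ i, 2 ≤ Fintype.card (P.B i))
    (i j : Fin (P.r + 1)) (h : (i : ℕ) < (j : ℕ)) (v : P.B i) (w : P.B j) :
    P.hsum i v < P.hsum j w := by
  have key : ∀ g : ℕ, ∀ (i j : Fin (P.r + 1)) (v : P.B i) (w : P.B j),
      (i : ℕ) + 1 + g = (j : ℕ) → P.hsum i v < P.hsum j w := by
    intro g
    induction g with
    | zero =>
      intro i j v w hij
      exact hstep i j (by omega) v w
    | succ g ih =>
      intro i j v w hij
      have hjv := j.isLt
      have hz : Nonempty (P.B (⟨(j : ℕ) - 1, by omega⟩ : Fin (P.r + 1))) :=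
        Fintype.card_pos_iff.mp (by have := hcard ⟨(j : ℕ) - 1, by omega⟩; omega)
      obtain ⟨z⟩ := hz
      refine lt_trans (ih i ⟨(j : ℕ) - 1, by omega⟩ v z ?_)
        (hstep ⟨(j : ℕ) - 1, by omega⟩ j ?_ z w)
      · show (i : ℕ) + 1 + g = (j : ℕ) - 1
        omega
      · show ((j : ℕ) - 1) + 1 = (j : ℕ)
        omega
  exact key ((j : ℕ) - (i : ℕ) - 1) i j v w (by omega)

lemma tval_lt_of_blocks
    (hstep : ∀ i j : Fin (P.r + 1), (i : ℕ) + 1 = (j : ℕ) →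
      ∀ (v : P.B i) (w : P.B j), P.hsum i v < P.hsum j w)
    (hcard : ∀ i, 2 ≤ Fintype.card (P.B i))
    (i j : Fin (P.r + 1)) (v : P.B i) (w : P.B j) (h : (i : ℕ) < (j : ℕ)) :
    P.tval ⟨i, v⟩ + 4 ≤ P.tval ⟨j, w⟩ := by
  have h1 := P.hsum_lt_blocks hstep hcard i j h v w
  have h2 : P.AA ((i : ℕ) + 1) ≤ P.AA (j : ℕ) := P.AA_mono (by omega)
  have h3 := P.AA_succ (i : ℕ)
  have h4 : ((P.rk i) v : ℕ) < P.nn (i : ℕ) := by rw [P.nn_val]; exact ((P.rk i) v).isLt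
  unfold tval
  dsimp only
  omega

lemma tval_lt_of_rk (i : Fin (P.r + 1)) (v w : P.B i)
    (h : ((P.rk i) v : ℕ) < ((P.rk i) w : ℕ)) :
    P.tval ⟨i, v⟩ + 4 ≤ P.tval ⟨i, w⟩ := by
  have h1 := P.hsum_rk_mono i h.le
  unfold tval
  dsimp only
  omega

lemma tval_inj
    (hstep : ∀ i j : Fin (P.r + 1), (i : ℕ) + 1 = (j : ℕ) →
      ∀ (v : P.B i) (w : P.B j), P.hsum i v < P.hsum j w)
    (hcard : ∀ i, 2 ≤ Fintype.card (P.B i))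
    (p q : Σ i, P.B i) (h : P.tval p = P.tval q) : p = q := by
  rcases p with ⟨i, v⟩
  rcases q with ⟨j, w⟩
  rcases Nat.lt_trichotomy (i : ℕ) (j : ℕ) with hij | hij | hij
  · have := P.tval_lt_of_blocks hstep hcard i j v w hij; omega
  · have hij' : i = j := Fin.ext hij
    subst hij'
    rcases Nat.lt_trichotomy ((P.rk i) v : ℕ) ((P.rk i) w : ℕ) with hr | hr | hr
    · have := P.tval_lt_of_rk i v w hr; omega
    · have : v = w := (P.rk i).injective (Fin.ext hr)
      rw [this]
    · have := P.tval_lt_of_rk i w v hr; omega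
  · have := P.tval_lt_of_blocks hstep hcard j i w v hij; omega

lemma TT_sep
    (hstep : ∀ i j : Fin (P.r + 1), (i : ℕ) + 1 = (j : ℕ) →
      ∀ (v : P.B i) (w : P.B j), P.hsum i v < P.hsum j w)
    (hcard : ∀ i, 2 ≤ Fintype.card (P.B i)) :
    ∀ x ∈ P.TT, ∀ y ∈ P.TT, x < y → x + 4 ≤ y := by
  rintro x ⟨⟨i, v⟩, rfl⟩ y ⟨⟨j, w⟩, rfl⟩ hxy
  rcases Nat.lt_trichotomy (i : ℕ) (j : ℕ) with hij | hij | hij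
  · exact P.tval_lt_of_blocks hstep hcard i j v w hij
  · have hij' : i = j := Fin.ext hij
    subst hij'
    rcases Nat.lt_trichotomy ((P.rk i) v : ℕ) ((P.rk i) w : ℕ) with hr | hr | hr
    · exact P.tval_lt_of_rk i v w hr
    · have : v = w := (P.rk i).injective (Fin.ext hr)
      rw [this] at hxy; omega
    · have := P.tval_lt_of_rk i w v hr; omega
  · have := P.tval_lt_of_blocks hstep hcard j i w v hij; omega

lemma vdeg_eq_degree (i : Fin (P.r + 1)) (v : P.B i) :
    vdeg (P.H i) v = (P.H i).degree v := by
  rw [vdeg, Nat.card_eq_fintype_card]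
  exact SimpleGraph.card_neighborSet_eq_degree _ _

lemma nn_le_two_mm (hconn : ∀ i, (P.H i).Connected) (hcard : ∀ i, 2 ≤ Fintype.card (P.B i))
    {k : ℕ} (hk : k ≤ P.r) : P.nn k ≤ 2 * P.mm k := by
  have hk' : k < P.r + 1 := by omega
  unfold nn mm
  rw [dif_pos hk', dif_pos hk']
  set i : Fin (P.r + 1) := ⟨k, hk'⟩
  have h1 : ∀ v : P.B i, 1 ≤ (P.H i).degree v := fun v => by
    rw [← P.vdeg_eq_degree]
    exact P.deg_pos hconn hcard i v
  calc Fintype.card (P.B i) = ∑ _v : P.B i, 1 := by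
        rw [Finset.sum_const, Finset.card_univ, smul_eq_mul, mul_one]
    _ ≤ ∑ v : P.B i, (P.H i).degree v := Finset.sum_le_sum fun v _ => h1 v
    _ = 2 * (P.H i).edgeFinset.card := SimpleGraph.sum_degrees_eq_twice_card_edges _

lemma mm_le_MM {k : ℕ} (hk : k ≤ P.r) : P.mm k ≤ P.MM := by
  have h1 : P.Msum (k + 1) ≤ P.MM := P.Msum_mono (by omega)
  have h2 := P.Msum_succ k
  omega

end Hyps2

/-! ### The avoidance lemma and knob specifications -/

lemma exists_avoid (T : Set ℕ) (hsep : ∀ x ∈ T, ∀ y ∈ T, x < y → x + 4 ≤ y)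
    (n c₁ c₂ : ℕ) (hn : 2 ≤ n) :
    ∃ d, d ≤ n ∧ (c₁ + d) ∉ T ∧ (c₂ + (n - d)) ∉ T := by
  classical
  set Ab := (Finset.range (n + 1)).filter (fun d => c₁ + d ∈ T) with hAb
  set Bb := (Finset.range (n + 1)).filter (fun d => c₂ + (n - d) ∈ T) with hBb
  have hA : Ab.card ≤ n / 4 + 1 := by
    refine le_trans (Finset.card_le_card_of_injOn (fun d : ℕ => d / 4)
      (t := Finset.range (n / 4 + 1)) ?_ ?_) (le_of_eq (Finset.card_range _))
    · intro d hd
      rw [hAb, Finset.mem_coe, Finset.mem_filter, Finset.mem_range] at hd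
      rw [Finset.mem_coe, Finset.mem_range]
      show d / 4 < n / 4 + 1
      omega
    · intro d hd d' hd' hdd
      simp only [Finset.mem_coe, hAb, Finset.mem_filter, Finset.mem_range] at hd hd'
      have hdd' : d / 4 = d' / 4 := hdd
      rcases Nat.lt_trichotomy d d' with h | h | h
      · have := hsep _ hd.2 _ hd'.2 (by omega)
        omega
      · exact h
      · have := hsep _ hd'.2 _ hd.2 (by omega)
        omega
  have hB : Bb.card ≤ n / 4 + 1 := by
    refine le_trans (Finset.card_le_card_of_injOn (fun d : ℕ => (n - d) / 4)
      (t := Finset.range (n / 4 + 1)) ?_ ?_) (le_of_eq (Finset.card_range _))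
    · intro d hd
      rw [hBb, Finset.mem_coe, Finset.mem_filter, Finset.mem_range] at hd
      rw [Finset.mem_coe, Finset.mem_range]
      show (n - d) / 4 < n / 4 + 1
      omega
    · intro d hd d' hd' hdd
      simp only [Finset.mem_coe, hBb, Finset.mem_filter, Finset.mem_range] at hd hd'
      have hdd' : (n - d) / 4 = (n - d') / 4 := hdd
      rcases Nat.lt_trichotomy d d' with h | h | h
      · have := hsep _ hd'.2 _ hd.2 (by omega)
        omega
      · exact h
      · have := hsep _ hd.2 _ hd'.2 (by omega)
        omega
  have hU : (Ab ∪ Bb).card < (Finset.range (n + 1)).card := by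
    have h1 := Finset.card_union_le Ab Bb
    rw [Finset.card_range]
    omega
  have hsub : Ab ∪ Bb ⊆ Finset.range (n + 1) := by
    rw [hAb, hBb]
    exact Finset.union_subset (Finset.filter_subset _ _) (Finset.filter_subset _ _)
  have hne : ((Finset.range (n + 1)) \ (Ab ∪ Bb)).Nonempty := by
    rw [← Finset.card_pos, Finset.card_sdiff_of_subset hsub]
    omega
  obtain ⟨d, hd⟩ := hne
  rw [Finset.mem_sdiff, Finset.mem_range, Finset.mem_union] at hd
  obtain ⟨hdmem, hdnot⟩ := hd
  push_neg at hdnot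
  refine ⟨d, by omega, ?_, ?_⟩
  · intro hc
    exact hdnot.1 (by rw [hAb, Finset.mem_filter, Finset.mem_range]; exact ⟨by omega, hc⟩)
  · intro hc
    exact hdnot.2 (by rw [hBb, Finset.mem_filter, Finset.mem_range]; exact ⟨by omega, hc⟩)

lemma dd_zero : P.dd 0 = P.d0F := if_pos rfl

lemma dd_of_ne_zero {k : ℕ} (h : k ≠ 0) : P.dd k = P.aux k := if_neg h

lemma auxF_spec (hsep : ∀ x ∈ P.TT, ∀ y ∈ P.TT, x < y → x + 4 ≤ y)
    (hcard : ∀ i, 2 ≤ Fintype.card (P.B i))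
    {k : ℕ} (hk : k ≤ P.r) (prev : ℕ) :
    (P.cfun k prev + P.auxF k prev) ∉ P.TT := by
  have hn := P.nn_two hcard hk
  have hex : ∃ d, d ≤ P.nn k ∧ (P.cfun k prev + d) ∉ P.TT := by
    obtain ⟨d, h1, h2, _⟩ := exists_avoid P.TT hsep (P.nn k) (P.cfun k prev) 0 hn
    exact ⟨d, h1, h2⟩
  unfold auxF
  rw [dif_pos hex]
  exact hex.choose_spec.2

lemma aux_spec (hsep : ∀ x ∈ P.TT, ∀ y ∈ P.TT, x < y → x + 4 ≤ y)
    (hcard : ∀ i, 2 ≤ Fintype.card (P.B i))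
    {k : ℕ} (h2 : 2 ≤ k) (hk : k ≤ P.r) :
    (P.cfun k (P.aux (k - 2)) + P.aux k) ∉ P.TT := by
  obtain ⟨k', rfl⟩ : ∃ k', k = k' + 2 := ⟨k - 2, by omega⟩
  rw [Nat.add_sub_cancel, P.aux_step]
  exact P.auxF_spec hsep hcard hk _

lemma d0F_spec (hsep : ∀ x ∈ P.TT, ∀ y ∈ P.TT, x < y → x + 4 ≤ y)
    (hcard : ∀ i, 2 ≤ Fintype.card (P.B i)) :
    (P.cA + P.d0F) ∉ P.TT ∧ (P.cB + (P.nn 0 - P.d0F)) ∉ P.TT := by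
  have hn : 2 ≤ P.nn 0 := P.nn_two hcard (by omega)
  have hex : ∃ d, d ≤ P.nn 0 ∧ (P.cA + d) ∉ P.TT ∧ (P.cB + (P.nn 0 - d)) ∉ P.TT :=
    exists_avoid P.TT hsep (P.nn 0) P.cA P.cB hn
  unfold d0F
  rw [dif_pos hex]
  exact ⟨hex.choose_spec.2.1, hex.choose_spec.2.2⟩

/-! ### The pan sums avoid the `H`-sums -/

lemma pan_not_in_TT (hsep : ∀ x ∈ P.TT, ∀ y ∈ P.TT, x < y → x + 4 ≤ y)
    (hcard : ∀ i, 2 ≤ Fintype.card (P.B i))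
    (a : Fin (P.r + 1)) : P.WW (Sum.inl a) ∉ P.TT := by
  have hr := P.hr
  have hav := a.isLt
  by_cases h0 : (a : ℕ) = 0
  · rw [P.WW_u0 a h0, P.dd_zero]
    exact (P.d0F_spec hsep hcard).1
  · by_cases h1 : (a : ℕ) = 1
    · have heq : P.WW (Sum.inl a) = P.cfun 2 (P.aux 0) + P.aux 2 := by
        rw [P.WW_u1 a h1]
        unfold cfun
        rw [if_pos rfl, P.dd_of_ne_zero (by omega : (1:ℕ) ≠ 0),
          P.dd_of_ne_zero (by omega : (2:ℕ) ≠ 0), P.aux_one, P.aux_zero]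
        omega
      rw [heq]
      exact P.aux_spec hsep hcard (by omega) (by omega)
    · by_cases hmid : (a : ℕ) ≤ P.r - 1
      · have heq : P.WW (Sum.inl a) =
            P.cfun ((a : ℕ) + 1) (P.aux ((a : ℕ) + 1 - 2)) + P.aux ((a : ℕ) + 1) := by
          rw [P.WW_mid a (by omega) hmid]
          unfold cfun
          rw [if_neg (by omega : ¬ (a : ℕ) + 1 = 2)]
          rw [show (a : ℕ) + 1 - 2 = (a : ℕ) - 1 by omega,
            P.dd_of_ne_zero (by omega : (a : ℕ) + 1 ≠ 0),
            P.dd_of_ne_zero (by omega : (a : ℕ) - 1 ≠ 0)]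
          omega
        rw [heq]
        exact P.aux_spec hsep hcard (by omega) (by omega)
      · have har : (a : ℕ) = P.r := by omega
        have heq : P.WW (Sum.inl a) = P.cB + (P.nn 0 - P.dd 0) := by
          rw [P.WW_ur a har]
          unfold cB
          rw [P.dd_of_ne_zero (by omega : P.r - 1 ≠ 0),
            P.dd_of_ne_zero (by omega : P.r ≠ 0)]
          omega
        rw [heq, P.dd_zero]
        exact (P.d0F_spec hsep hcard).2

/-! ### The pan sums are strictly increasing -/

lemma Lo_gap (hmono : ∀ i j : Fin (P.r + 1), (i : ℕ) + 1 = (j : ℕ) →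
      Fintype.card (P.B i) ≤ Fintype.card (P.B j))
    {k : ℕ} (hk : k + 1 ≤ P.r) :
    P.Lo k + 2 * (P.nn k * P.nn k) ≤ P.Lo (k + 1) := by
  have h1 := P.nn_mono hmono hk
  have h2 := P.AA_succ k
  have e1 : P.nn k * P.AA (k + 1) = P.nn k * P.AA k + 2 * (P.nn k * P.nn k) := by
    rw [h2]; ring
  have e2 : P.nn k * P.AA (k + 1) ≤ P.nn (k + 1) * P.AA (k + 1) :=
    Nat.mul_le_mul_right _ h1
  have e3 : P.nn k * P.nn k ≤ P.nn (k + 1) * P.nn (k + 1) := Nat.mul_le_mul h1 h1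
  unfold Lo
  omega

lemma nn_sq (hcard : ∀ i, 2 ≤ Fintype.card (P.B i)) {k : ℕ} (hk : k ≤ P.r) :
    2 * P.nn k ≤ P.nn k * P.nn k :=
  Nat.mul_le_mul_right _ (P.nn_two hcard hk)

lemma WW_pan_succ
    (hconn : ∀ i, (P.H i).Connected) (hcard : ∀ i, 2 ≤ Fintype.card (P.B i))
    (hmono : ∀ i j : Fin (P.r + 1), (i : ℕ) + 1 = (j : ℕ) →
      Fintype.card (P.B i) ≤ Fintype.card (P.B j))
    (a b : Fin (P.r + 1)) (hab : (a : ℕ) + 1 = (b : ℕ)) :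
    P.WW (Sum.inl a) < P.WW (Sum.inl b) := by
  have hr := P.hr
  have hbv := b.isLt
  by_cases h0 : (a : ℕ) = 0
  · -- u₀ < u₁
    rw [P.WW_u0 a h0, P.WW_u1 b (by omega)]
    have g1 := P.Lo_gap hmono (k := 0) (by omega)
    rw [show (0 : ℕ) + 1 = 1 from rfl] at g1
    have s0 := P.nn_sq hcard (k := 0) (by omega)
    have d0 := P.dd_le 0
    unfold lab
    omega
  · by_cases h1 : (a : ℕ) = 1
    · -- u₁ < u₂
      rw [P.WW_u1 a h1, P.WW_mid b (by omega) (by omega),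
        show (b : ℕ) = 2 by omega, show (2 : ℕ) - 1 = 1 by norm_num]
      have g2 := P.Lo_gap hmono (k := 2) (by omega)
      have s2 := P.nn_sq hcard (k := 2) (by omega)
      have d1 := P.dd_le 1
      have d2 := P.dd_le 2
      have n12 : P.nn 1 ≤ P.nn 2 := by
        have h := P.nn_mono hmono (k := 1) (by omega)
        rwa [show (1 : ℕ) + 1 = 2 from rfl] at h
      unfold lab
      omega
    · by_cases hmid : (a : ℕ) ≤ P.r - 2
      · -- middle step
        rw [P.WW_mid a (by omega) (by omega), P.WW_mid b (by omega) (by omega),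
          show (b : ℕ) = (a : ℕ) + 1 by omega,
          show (a : ℕ) + 1 - 1 = (a : ℕ) by omega]
        have g1 := P.Lo_gap hmono (k := (a : ℕ) + 1) (by omega)
        have g2 := P.Lo_gap hmono (k := (a : ℕ) - 1) (by omega)
        rw [show (a : ℕ) - 1 + 1 = (a : ℕ) by omega] at g2
        have s1 := P.nn_sq hcard (k := (a : ℕ) + 1) (by omega)
        have s2 := P.nn_sq hcard (k := (a : ℕ) - 1) (by omega)
        have da1 := P.dd_le ((a : ℕ) + 1)
        have da2 := P.dd_le ((a : ℕ) - 1)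
        have da3 := P.dd_le (a : ℕ)
        unfold lab
        omega
      · -- u_{r-1} < u_r
        have har : (a : ℕ) = P.r - 1 := by omega
        rw [P.WW_mid a (by omega) (by omega), P.WW_ur b (by omega), har,
          show P.r - 1 + 1 = P.r by omega, show P.r - 1 - 1 = P.r - 2 by omega]
        have g1 := P.Lo_gap hmono (k := P.r - 2) (by omega)
        rw [show P.r - 2 + 1 = P.r - 1 by omega] at g1
        have s1 := P.nn_sq hcard (k := P.r - 2) (by omega)
        have dr := P.dd_le P.r
        have dr1 := P.dd_le (P.r - 1)
        have dr2 := P.dd_le (P.r - 2)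
        have d0 := P.dd_le 0
        have hnr : P.nn P.r ≤ 2 * P.mm P.r := P.nn_le_two_mm hconn hcard (by omega)
        have hmr : P.mm P.r ≤ P.MM := P.mm_le_MM (by omega)
        have hLo0 : 2 * P.AA 0 ≤ P.Lo 0 := by
          have h2 : 2 ≤ P.nn 0 := P.nn_two hcard (by omega)
          have := Nat.mul_le_mul_right (P.AA 0) h2
          unfold Lo
          omega
        have hAA0 := P.MM_le_AA 0
        unfold lab
        omega

lemma WW_pan_lt
    (hconn : ∀ i, (P.H i).Connected) (hcard : ∀ i, 2 ≤ Fintype.card (P.B i))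
    (hmono : ∀ i j : Fin (P.r + 1), (i : ℕ) + 1 = (j : ℕ) →
      Fintype.card (P.B i) ≤ Fintype.card (P.B j))
    (a b : Fin (P.r + 1)) (hab : (a : ℕ) < (b : ℕ)) :
    P.WW (Sum.inl a) < P.WW (Sum.inl b) := by
  have key : ∀ g : ℕ, ∀ a b : Fin (P.r + 1), (a : ℕ) + 1 + g = (b : ℕ) →
      P.WW (Sum.inl a) < P.WW (Sum.inl b) := by
    intro g
    induction g with
    | zero =>
      intro a b hab
      exact P.WW_pan_succ hconn hcard hmono a b (by omega)
    | succ g ih =>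
      intro a b hab
      have hbv := b.isLt
      refine lt_trans (ih a ⟨(b : ℕ) - 1, by omega⟩ ?_)
        (P.WW_pan_succ hconn hcard hmono ⟨(b : ℕ) - 1, by omega⟩ b ?_)
      · show (a : ℕ) + 1 + g = (b : ℕ) - 1
        omega
      · show ((b : ℕ) - 1) + 1 = (b : ℕ)
        omega
  exact key ((b : ℕ) - (a : ℕ) - 1) a b (by omega)

/-! ### Injectivity of the vertex sums -/

lemma WW_injective
    (hconn : ∀ i, (P.H i).Connected) (hcard : ∀ i, 2 ≤ Fintype.card (P.B i))
    (hmono : ∀ i j : Fin (P.r + 1), (i : ℕ) + 1 = (j : ℕ) →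
      Fintype.card (P.B i) ≤ Fintype.card (P.B j))
    (ha : ∀ (u : P.B ⟨0, by have := P.hr; omega⟩) (v : P.B ⟨1, by have := P.hr; omega⟩),
      vdeg (P.H ⟨0, by have := P.hr; omega⟩) u < vdeg (P.H ⟨1, by have := P.hr; omega⟩) v)
    (hb : ∀ i j : Fin (P.r + 1), 1 ≤ (i : ℕ) → (i : ℕ) + 1 = (j : ℕ) →
      ∀ (u : P.B i) (v : P.B j), vdeg (P.H i) u ≤ vdeg (P.H j) v) :
    Function.Injective P.WW := by
  have hstep : ∀ i j : Fin (P.r + 1), (i : ℕ) + 1 = (j : ℕ) →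
      ∀ (v : P.B i) (w : P.B j), P.hsum i v < P.hsum j w :=
    fun i j hij v w => P.hsum_lt_step i j hij v w (P.deg_step ha hb i j hij v w)
      (P.deg_pos hconn hcard j w)
  have hsep := P.TT_sep hstep hcard
  intro x y h
  rcases x with a | p <;> rcases y with b | q
  · rcases Nat.lt_trichotomy (a : ℕ) (b : ℕ) with hc | hc | hc
    · have := P.WW_pan_lt hconn hcard hmono a b hc; omega
    · exact congrArg Sum.inl (Fin.ext hc)
    · have := P.WW_pan_lt hconn hcard hmono b a hc; omega
  · exfalso
    apply P.pan_not_in_TT hsep hcard a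
    rw [h]
    rcases q with ⟨i, v⟩
    rw [P.WW_inr]
    exact ⟨⟨i, v⟩, rfl⟩
  · exfalso
    apply P.pan_not_in_TT hsep hcard b
    rw [← h]
    rcases p with ⟨i, v⟩
    rw [P.WW_inr]
    exact ⟨⟨i, v⟩, rfl⟩
  · rcases p with ⟨i, v⟩
    rcases q with ⟨j, w⟩
    rw [P.WW_inr, P.WW_inr] at h
    exact congrArg Sum.inr (P.tval_inj hstep hcard _ _ h)

/-! ### Values of the labeling on edges -/

lemma Fv_pan (k : Fin (P.r + 1)) :
    P.Fv (Sum.inl (panEnds P.r P.hr k).1) (Sum.inl (panEnds P.r P.hr k).2) = P.lab k := by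
  rw [P.Fv_inl_inl, Finset.sum_add_distrib,
    sum_ite_eq_single _ _ k (fun k' => by
      constructor
      · rintro ⟨h1, h2⟩
        exact P.ends_inj k' k (Prod.ext h1.symm h2.symm)
      · rintro rfl
        exact ⟨rfl, rfl⟩),
    sum_ite_eq_zero _ _ (fun k' => by
      rintro ⟨h1, h2⟩
      have a1 := P.E1_lt_E2 k
      have a2 := P.E1_lt_E2 k'
      unfold E1 E2 at a1 a2
      rw [← h1, ← h2] at a2
      omega)]
  rw [add_zero]

lemma Fv_joinx (i : Fin (P.r + 1)) (w : P.B i) :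
    P.Fv (Sum.inl (panEnds P.r P.hr i).1) (Sum.inr ⟨i, w⟩) = P.xlab i w := by
  rw [P.Fv_inl_inr, if_pos rfl, if_neg (P.ends_ne i), add_zero]

lemma Fv_joiny (i : Fin (P.r + 1)) (w : P.B i) :
    P.Fv (Sum.inl (panEnds P.r P.hr i).2) (Sum.inr ⟨i, w⟩) = P.ylab i w := by
  rw [P.Fv_inl_inr, if_neg (fun h => P.ends_ne i h.symm), if_pos rfl, zero_add]

/-- classification of edges of the corona together with their labels -/
lemma edge_classify (x y : Fin (P.r + 1) ⊕ Σ i, P.B i) (h : P.GG.Adj x y) :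
    (∃ k, s(x, y) = s(Sum.inl (panEnds P.r P.hr k).1, Sum.inl (panEnds P.r P.hr k).2) ∧
      P.Fv x y = P.lab k) ∨
    (∃ i, ∃ w : P.B i,
      (s(x, y) = s(Sum.inl (panEnds P.r P.hr i).1, Sum.inr ⟨i, w⟩) ∧ P.Fv x y = P.xlab i w) ∨
      (s(x, y) = s(Sum.inl (panEnds P.r P.hr i).2, Sum.inr ⟨i, w⟩) ∧ P.Fv x y = P.ylab i w)) ∨
    (∃ i, ∃ v w : P.B i, (P.H i).Adj v w ∧
      s(x, y) = s(Sum.inr ⟨i, v⟩, Sum.inr ⟨i, w⟩) ∧ P.Fv x y = P.hlab i s(v, w)) := by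
  rcases x with a | ⟨i, v⟩ <;> rcases y with b | ⟨j, w⟩
  · left
    obtain ⟨k, ⟨h1, h2⟩ | ⟨h1, h2⟩⟩ := (P.adj_inl_inl a b).mp h
    · subst h1; subst h2
      exact ⟨k, rfl, P.Fv_pan k⟩
    · subst h1; subst h2
      exact ⟨k, Sym2.eq_swap, (P.Fv_symm _ _).trans (P.Fv_pan k)⟩
  · right; left
    obtain h1 | h1 := (P.adj_inl_inr a j w).mp h
    · subst h1
      exact ⟨j, w, Or.inl ⟨rfl, P.Fv_joinx j w⟩⟩
    · subst h1
      exact ⟨j, w, Or.inr ⟨rfl, P.Fv_joiny j w⟩⟩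
  · right; left
    obtain h1 | h1 := (P.adj_inl_inr b i v).mp h.symm
    · subst h1
      exact ⟨i, v, Or.inl ⟨Sym2.eq_swap, (P.Fv_symm _ _).trans (P.Fv_joinx i v)⟩⟩
    · subst h1
      exact ⟨i, v, Or.inr ⟨Sym2.eq_swap, (P.Fv_symm _ _).trans (P.Fv_joiny i v)⟩⟩
  · right; right
    obtain ⟨hij, hadj⟩ := (P.adj_inr_inr i j v w).mp h
    subst hij
    exact ⟨i, v, w, hadj, rfl, by rw [P.Fv_inr_inr_same, if_pos hadj]⟩

/-! ### Ranges of the three kinds of labels -/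

lemma lab_bounds {k : ℕ} (hk : k ≤ P.r) : P.MM + 1 ≤ P.lab k ∧ P.lab k ≤ P.MM + P.r + 1 := by
  unfold lab; omega

lemma hlab_range (i : Fin (P.r + 1)) (e : Sym2 (P.B i)) (he : e ∈ (P.H i).edgeFinset) :
    1 ≤ P.hlab i e ∧ P.hlab i e ≤ P.MM := by
  have h1 := P.hlab_bounds i e he
  have h2 : P.Msum (↑i + 1) ≤ P.MM := P.Msum_mono (by have := i.isLt; omega)
  omega

lemma xlab_range (i : Fin (P.r + 1)) (w : P.B i) :
    P.MM + P.r + 2 ≤ P.xlab i w ∧ P.xlab i w ≤ P.qq := by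
  have h1 := P.xlab_bounds i w
  have h2 := P.MM_le_AA (i : ℕ)
  have h3 : P.AA (↑i + 1) ≤ P.qq := P.AA_le_qq (by have := i.isLt; omega)
  omega

lemma ylab_range (i : Fin (P.r + 1)) (w : P.B i) :
    P.MM + P.r + 2 ≤ P.ylab i w ∧ P.ylab i w ≤ P.qq := by
  have h1 := P.ylab_bounds i w
  have h2 := P.MM_le_AA (i : ℕ)
  have h3 : P.AA (↑i + 1) ≤ P.qq := P.AA_le_qq (by have := i.isLt; omega)
  omega

lemma MM_le_qq : P.MM + P.r + 1 ≤ P.qq := by unfold qq; omega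

lemma block_unique (F : ℕ → ℕ) (hmono : Monotone F) {i j : Fin (P.r + 1)} {x : ℕ}
    (hi1 : F ↑i < x) (hi2 : x ≤ F (↑i + 1)) (hj1 : F ↑j < x) (hj2 : x ≤ F (↑j + 1)) :
    i = j := by
  refine Fin.ext ?_
  rcases Nat.lt_trichotomy (i : ℕ) (j : ℕ) with hc | hc | hc
  · have := hmono (show (i : ℕ) + 1 ≤ (j : ℕ) by omega)
    omega
  · exact hc
  · have := hmono (show (j : ℕ) + 1 ≤ (i : ℕ) by omega)
    omega

lemma xy_block (i : Fin (P.r + 1)) (w : P.B i) {x : ℕ}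
    (hx : x = P.xlab i w ∨ x = P.ylab i w) :
    P.AA ↑i < x ∧ x ≤ P.AA (↑i + 1) := by
  rcases hx with rfl | rfl
  · have := P.xlab_bounds i w; omega
  · have := P.ylab_bounds i w; omega

/-! ### `ff` maps the edge set into `Icc 1 qq` -/

lemma ff_mapsTo : Set.MapsTo P.ff P.GG.edgeSet (Set.Icc 1 P.qq) := by
  intro e he
  induction e using Sym2.ind with
  | _ x y =>
    rw [SimpleGraph.mem_edgeSet] at he
    rw [P.ff_mk]
    rcases P.edge_classify x y he with ⟨k, _, hval⟩ | ⟨i, w, ⟨_, hval⟩ | ⟨_, hval⟩⟩ |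
      ⟨i, v, w, hadj, _, hval⟩
    · have h1 := P.lab_bounds (k := (k : ℕ)) (by have := k.isLt; omega)
      have h2 := P.MM_le_qq
      rw [hval]
      constructor <;> omega
    · have h1 := P.xlab_range i w
      rw [hval]
      constructor <;> omega
    · have h1 := P.ylab_range i w
      rw [hval]
      constructor <;> omega
    · have h1 := P.hlab_range i s(v, w) (by rwa [SimpleGraph.mem_edgeFinset, SimpleGraph.mem_edgeSet])
      have h2 := P.MM_le_qq
      rw [hval]
      constructor <;> omega

/-! ### `ff` is injective on the edge set -/

lemma inj_main (x y x' y' : Fin (P.r + 1) ⊕ Σ i, P.B i)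
    (h : P.GG.Adj x y) (h' : P.GG.Adj x' y') (hee : P.Fv x y = P.Fv x' y') :
    s(x, y) = s(x', y') := by
  have hq := P.MM_le_qq
  rcases P.edge_classify x y h with ⟨k, hs, hval⟩ | ⟨i, w, ⟨hs, hval⟩ | ⟨hs, hval⟩⟩ |
    ⟨i, v, w, hadj, hs, hval⟩ <;>
    rcases P.edge_classify x' y' h' with ⟨k', hs', hval'⟩ | ⟨i', w', ⟨hs', hval'⟩ | ⟨hs', hval'⟩⟩ |
      ⟨i', v', w', hadj', hs', hval'⟩ <;>
    rw [hval, hval'] at hee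
  -- pan / pan
  · have : k = k' := by
      refine Fin.ext ?_
      unfold lab at hee
      omega
    subst this
    rw [hs, hs']
  -- pan / joinx
  · have h1 := P.lab_bounds (k := (k : ℕ)) (by have := k.isLt; omega)
    have h2 := P.xlab_range i' w'
    omega
  -- pan / joiny
  · have h1 := P.lab_bounds (k := (k : ℕ)) (by have := k.isLt; omega)
    have h2 := P.ylab_range i' w'
    omega
  -- pan / H
  · have h1 := P.lab_bounds (k := (k : ℕ)) (by have := k.isLt; omega)
    have h2 := P.hlab_range i' s(v', w')
      (by rwa [SimpleGraph.mem_edgeFinset, SimpleGraph.mem_edgeSet])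
    omega
  -- joinx / pan
  · have h1 := P.lab_bounds (k := (k' : ℕ)) (by have := k'.isLt; omega)
    have h2 := P.xlab_range i w
    omega
  -- joinx / joinx
  · have hii : i = i' := P.block_unique P.AA P.AA_monotone
      (P.xy_block i w (Or.inl rfl)).1 (P.xy_block i w (Or.inl rfl)).2
      (P.xy_block i' w' (Or.inl hee)).1 (P.xy_block i' w' (Or.inl hee)).2
    subst hii
    have hrk : ((P.rk i) w : ℕ) = ((P.rk i) w' : ℕ) := by
      have e1 := P.eps_le_one i w
      have e2 := P.eps_le_one i w'
      unfold xlab at hee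
      omega
    have hww : w = w' := (P.rk i).injective (Fin.ext hrk)
    subst hww
    rw [hs, hs']
  -- joinx / joiny
  · exfalso
    have hii : i = i' := P.block_unique P.AA P.AA_monotone
      (P.xy_block i w (Or.inl rfl)).1 (P.xy_block i w (Or.inl rfl)).2
      (P.xy_block i' w' (Or.inr hee)).1 (P.xy_block i' w' (Or.inr hee)).2
    subst hii
    have hrk : ((P.rk i) w : ℕ) = ((P.rk i) w' : ℕ) := by
      have e1 := P.eps_le_one i w
      have e2 := P.eps_le_one i w'
      unfold xlab ylab at hee
      omega
    have hww : w = w' := (P.rk i).injective (Fin.ext hrk)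
    subst hww
    have e1 := P.eps_le_one i w
    unfold xlab ylab at hee
    omega
  -- joinx / H
  · have h1 := P.xlab_range i w
    have h2 := P.hlab_range i' s(v', w')
      (by rwa [SimpleGraph.mem_edgeFinset, SimpleGraph.mem_edgeSet])
    omega
  -- joiny / pan
  · have h1 := P.lab_bounds (k := (k' : ℕ)) (by have := k'.isLt; omega)
    have h2 := P.ylab_range i w
    omega
  -- joiny / joinx
  · exfalso
    have hii : i = i' := P.block_unique P.AA P.AA_monotone
      (P.xy_block i w (Or.inr rfl)).1 (P.xy_block i w (Or.inr rfl)).2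
      (P.xy_block i' w' (Or.inl hee)).1 (P.xy_block i' w' (Or.inl hee)).2
    subst hii
    have hrk : ((P.rk i) w : ℕ) = ((P.rk i) w' : ℕ) := by
      have e1 := P.eps_le_one i w
      have e2 := P.eps_le_one i w'
      unfold xlab ylab at hee
      omega
    have hww : w = w' := (P.rk i).injective (Fin.ext hrk)
    subst hww
    have e1 := P.eps_le_one i w
    unfold xlab ylab at hee
    omega
  -- joiny / joiny
  · have hii : i = i' := P.block_unique P.AA P.AA_monotone
      (P.xy_block i w (Or.inr rfl)).1 (P.xy_block i w (Or.inr rfl)).2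
      (P.xy_block i' w' (Or.inr hee)).1 (P.xy_block i' w' (Or.inr hee)).2
    subst hii
    have hrk : ((P.rk i) w : ℕ) = ((P.rk i) w' : ℕ) := by
      have e1 := P.eps_le_one i w
      have e2 := P.eps_le_one i w'
      unfold ylab at hee
      omega
    have hww : w = w' := (P.rk i).injective (Fin.ext hrk)
    subst hww
    rw [hs, hs']
  -- joiny / H
  · have h1 := P.ylab_range i w
    have h2 := P.hlab_range i' s(v', w')
      (by rwa [SimpleGraph.mem_edgeFinset, SimpleGraph.mem_edgeSet])
    omega
  -- H / pan
  · have h1 := P.lab_bounds (k := (k' : ℕ)) (by have := k'.isLt; omega)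
    have h2 := P.hlab_range i s(v, w)
      (by rwa [SimpleGraph.mem_edgeFinset, SimpleGraph.mem_edgeSet])
    omega
  -- H / joinx
  · have h1 := P.xlab_range i' w'
    have h2 := P.hlab_range i s(v, w)
      (by rwa [SimpleGraph.mem_edgeFinset, SimpleGraph.mem_edgeSet])
    omega
  -- H / joiny
  · have h1 := P.ylab_range i' w'
    have h2 := P.hlab_range i s(v, w)
      (by rwa [SimpleGraph.mem_edgeFinset, SimpleGraph.mem_edgeSet])
    omega
  -- H / H
  · have hmem : s(v, w) ∈ (P.H i).edgeFinset := by
      rwa [SimpleGraph.mem_edgeFinset, SimpleGraph.mem_edgeSet]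
    have hmem' : s(v', w') ∈ (P.H i').edgeFinset := by
      rwa [SimpleGraph.mem_edgeFinset, SimpleGraph.mem_edgeSet]
    have hb1 := P.hlab_bounds i s(v, w) hmem
    have hb2 := P.hlab_bounds i' s(v', w') hmem'
    have hii : i = i' := P.block_unique P.Msum P.Msum_mono (x := P.hlab i s(v, w))
      (by omega) (by omega) (by rw [hee]; omega) (by rw [hee]; omega)
    subst hii
    have hidx : P.eIdx i s(v, w) = P.eIdx i s(v', w') := by
      unfold hlab at hee
      omega
    unfold eIdx at hidx
    rw [dif_pos hmem, dif_pos hmem'] at hidx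
    have heq : s(v, w) = s(v', w') := by
      have := ((P.H i).edgeFinset.equivFin).injective (Fin.ext hidx)
      exact Subtype.mk_eq_mk.mp this
    rw [hs, hs']
    have := congrArg (Sym2.map (fun z => (Sum.inr ⟨i, z⟩ : Fin (P.r + 1) ⊕ Σ n, P.B n))) heq
    rwa [Sym2.map_pair_eq, Sym2.map_pair_eq] at this

/-! ### Surjectivity -/

lemma locate_gen (F : ℕ → ℕ) : ∀ (T m : ℕ), F 0 < m → m ≤ F T →
    ∃ i, i < T ∧ F i < m ∧ m ≤ F (i + 1) := by
  intro T
  induction T with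
  | zero => intro m h1 h2; omega
  | succ T ih =>
    intro m h1 h2
    by_cases hc : m ≤ F T
    · obtain ⟨i, hi, h⟩ := ih m h1 hc
      exact ⟨i, by omega, h⟩
    · exact ⟨T, by omega, by omega, h2⟩

lemma H_edge_surj (i : Fin (P.r + 1)) (z : Sym2 (P.B i)) (hz : z ∈ (P.H i).edgeFinset) :
    ∃ E ∈ P.GG.edgeSet, P.ff E = P.hlab i z := by
  induction z using Sym2.ind with
  | _ v w =>
    have hadj : (P.H i).Adj v w := by rwa [SimpleGraph.mem_edgeFinset, SimpleGraph.mem_edgeSet] at hz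
    refine ⟨s(Sum.inr ⟨i, v⟩, Sum.inr ⟨i, w⟩), ?_, ?_⟩
    · rw [SimpleGraph.mem_edgeSet]
      exact (P.adj_inr_inr i i v w).mpr ⟨rfl, hadj⟩
    · rw [P.ff_mk, P.Fv_inr_inr_same, if_pos hadj]

lemma ff_surjOn : Set.SurjOn P.ff P.GG.edgeSet (Set.Icc 1 P.qq) := by
  intro m hm
  rw [Set.mem_Icc] at hm
  rw [Set.mem_image]
  by_cases hH : m ≤ P.MM
  · -- an H-edge label
    have h0 : P.Msum 0 < m := by
      unfold Msum
      rw [Finset.range_zero, Finset.sum_empty]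
      omega
    obtain ⟨iv, hiv, hlt, hle⟩ := locate_gen P.Msum (P.r + 1) m h0 (by exact hH)
    have hmm : m - P.Msum iv - 1 < P.mm iv := by
      have := P.Msum_succ iv
      omega
    have hmm' : m - P.Msum iv - 1 < (P.H (⟨iv, hiv⟩ : Fin (P.r + 1))).edgeFinset.card := by
      rw [← P.mm_val ⟨iv, hiv⟩]
      exact hmm
    set ee := (P.H (⟨iv, hiv⟩ : Fin (P.r + 1))).edgeFinset.equivFin.symm ⟨m - P.Msum iv - 1, hmm'⟩
      with hee
    obtain ⟨E, hE, hval⟩ := P.H_edge_surj ⟨iv, hiv⟩ ee.1 ee.2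
    refine ⟨E, hE, ?_⟩
    rw [hval]
    unfold hlab eIdx
    rw [dif_pos ee.2]
    have h2 : (⟨ee.1, ee.2⟩ : {e // e ∈ (P.H (⟨iv, hiv⟩ : Fin (P.r + 1))).edgeFinset}) = ee :=
      rfl
    rw [h2, hee, Equiv.apply_symm_apply]
    show P.Msum iv + 1 + (m - P.Msum iv - 1) = m
    omega
  · by_cases hpan : m ≤ P.MM + P.r + 1
    · -- a pan-edge label
      refine ⟨s(Sum.inl (panEnds P.r P.hr ⟨m - P.MM - 1, by omega⟩).1,
        Sum.inl (panEnds P.r P.hr ⟨m - P.MM - 1, by omega⟩).2), ?_, ?_⟩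
      · rw [SimpleGraph.mem_edgeSet]
        exact (P.adj_inl_inl _ _).mpr ⟨⟨m - P.MM - 1, by omega⟩, Or.inl ⟨rfl, rfl⟩⟩
      · rw [P.ff_mk, P.Fv_pan]
        show P.MM + 1 + (m - P.MM - 1) = m
        omega
    · -- a join-edge label
      have h0 : P.AA 0 < m := by
        unfold AA Nsum
        rw [Finset.range_zero, Finset.sum_empty]
        omega
      have hq : m ≤ P.AA (P.r + 1) := by
        have h1 : P.AA (P.r + 1) = P.qq := by unfold AA qq; ring
        omega
      obtain ⟨iv, hiv, hlt, hle⟩ := locate_gen P.AA (P.r + 1) m h0 hq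
      have hlt2 : m - P.AA iv - 1 < 2 * P.nn iv := by
        have := P.AA_succ iv
        omega
      have hj' : (m - P.AA iv - 1) / 2 < Fintype.card (P.B (⟨iv, hiv⟩ : Fin (P.r + 1))) := by
        rw [← P.nn_val ⟨iv, hiv⟩]
        show (m - P.AA iv - 1) / 2 < P.nn iv
        omega
      set w := (P.rk ⟨iv, hiv⟩).symm ⟨(m - P.AA iv - 1) / 2, hj'⟩ with hw
      have hrkw : ((P.rk ⟨iv, hiv⟩) w : ℕ) = (m - P.AA iv - 1) / 2 := by
        rw [hw, Equiv.apply_symm_apply]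
      have hAAeq : P.AA ↑(⟨iv, hiv⟩ : Fin (P.r + 1)) = P.AA iv := rfl
      by_cases hx : m = P.xlab ⟨iv, hiv⟩ w
      · refine ⟨s(Sum.inl (panEnds P.r P.hr ⟨iv, hiv⟩).1, Sum.inr ⟨⟨iv, hiv⟩, w⟩), ?_, ?_⟩
        · rw [SimpleGraph.mem_edgeSet]
          exact (P.adj_inl_inr _ _ _).mpr (Or.inl rfl)
        · rw [P.ff_mk, P.Fv_joinx, ← hx]
      · have hy : m = P.ylab ⟨iv, hiv⟩ w := by
          have he := P.eps_le_one ⟨iv, hiv⟩ w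
          unfold xlab at hx
          unfold ylab
          rw [hrkw, hAAeq] at *
          omega
        refine ⟨s(Sum.inl (panEnds P.r P.hr ⟨iv, hiv⟩).2, Sum.inr ⟨⟨iv, hiv⟩, w⟩), ?_, ?_⟩
        · rw [SimpleGraph.mem_edgeSet]
          exact (P.adj_inl_inr _ _ _).mpr (Or.inr rfl)
        · rw [P.ff_mk, P.Fv_joiny, ← hy]

lemma ff_injOn : Set.InjOn P.ff P.GG.edgeSet := by
  intro e he e' he' hee
  revert he he' hee
  induction e using Sym2.ind with
  | _ x y =>
    induction e' using Sym2.ind with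
    | _ x' y' =>
      intro he he' hee
      rw [SimpleGraph.mem_edgeSet] at he he'
      rw [P.ff_mk, P.ff_mk] at hee
      exact P.inj_main x y x' y' he he' hee

lemma ff_bijOn : Set.BijOn P.ff P.GG.edgeSet (Set.Icc 1 P.qq) :=
  ⟨P.ff_mapsTo, P.ff_injOn, P.ff_surjOn⟩

lemma card_edgeSet : Nat.card P.GG.edgeSet = P.qq := by
  rw [Nat.card_congr (Set.BijOn.equiv P.ff P.ff_bijOn)]
  rw [Nat.card_coe_set_eq, ← Finset.coe_Icc, Set.ncard_coe_finset, Nat.card_Icc]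
  omega
end PanData
end AM
/-- `G₁ ⋄ (H₀, H₁, ..., H_r)`, `r ≥ 3`, is antimagic provided the `Hᵢ` are connected,
have at least two vertices, are ordered by size, and
(a) `Δ(H₀) < δ(H₁)`;
(b) `Δ(Hᵢ) ≤ δ(Hᵢ₊₁)` for `1 ≤ i ≤ r-1`;
(c) the corona-degree of `u₀` is at most the corona-degree of every vertex of every `Hᵢ`;
(d) the corona-degree of every vertex of `H_r` is at most the corona-degree of `u₁`.
(Conditions (a), (b) are stated pointwise: every degree in `Hᵢ` is `<` resp. `≤` every
degree in `Hᵢ₊₁`.) -/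
theorem pan_corona_antimagic
    (r : ℕ) (hr : 3 ≤ r)
    (B : Fin (r + 1) → Type*) [∀ i, Fintype (B i)]
    (H : ∀ i, SimpleGraph (B i))
    (hconn : ∀ i, (H i).Connected)
    (hcard : ∀ i, 2 ≤ Fintype.card (B i))
    (hmono : ∀ i j : Fin (r + 1), (i : ℕ) + 1 = (j : ℕ) →
      Fintype.card (B i) ≤ Fintype.card (B j))
    (ha : ∀ (u : B ⟨0, by omega⟩) (v : B ⟨1, by omega⟩),
      vdeg (H ⟨0, by omega⟩) u < vdeg (H ⟨1, by omega⟩) v)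
    (hb : ∀ i j : Fin (r + 1), 1 ≤ (i : ℕ) → (i : ℕ) + 1 = (j : ℕ) →
      ∀ (u : B i) (v : B j), vdeg (H i) u ≤ vdeg (H j) v)
    (hc : ∀ (i : Fin (r + 1)) (v : B i),
      vdeg (panCorona r hr H) (Sum.inl ⟨0, by omega⟩) ≤
        vdeg (panCorona r hr H) (Sum.inr ⟨i, v⟩))
    (hd : ∀ v : B ⟨r, by omega⟩,
      vdeg (panCorona r hr H) (Sum.inr ⟨⟨r, by omega⟩, v⟩) ≤
        vdeg (panCorona r hr H) (Sum.inl ⟨1, by omega⟩)) :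
    IsAntimagic (panCorona r hr H) := by
  classical
  let P : PanData := ⟨r, hr, B, inferInstance, H⟩
  refine ⟨P.ff, ?_, ?_⟩
  · have h1 : Nat.card (panCorona r hr H).edgeSet = P.qq := P.card_edgeSet
    rw [h1]
    exact P.ff_bijOn
  · exact P.WW_injective hconn hcard hmono ha hb
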